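/- arXiv:2411.10401 — 4 statements merged into one kernel-verified Lean document; each statement's English description precedes it below -/
import Mathlib

section
/- Let n ≥ 1, let (λ̄_j)_{j∈ℕ} be a sequence in ℝⁿ and (w_j)_{j∈ℕ} nonnegative real numbers. Let β : ℝⁿ → ℝ be nonnegative, and suppose there is ε₀ > 0 with β(τ̄) ≥ 1/2 whenever max_{1≤k≤n} |τ_k| ≤ ε₀. Let S ⊆ ℝⁿ, let m̄ = (m₁,…,mₙ) ∈ [0,∞)ⁿ and C > 0, and assume that ∑_{j=0}^∞ β(λ̄_j − μ̄) w_j ≤ C ∏_{k=1}^n (1+|μ_k|)^{m_k} for every μ̄ ∈ ℝⁿ whose Euclidean distance to S is at most √n. Then there exists C′ > 0, depending only on n, ε₀, C and m̄, such that for every μ̄ ∈ S one has ∑_{j : λ̄_j ∈ R_{μ̄}} w_j ≤ C′ ∏_{k=1}^n (1+|μ_k|)^{m_k}. -/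
open scoped ENNReal

private lemma coord_close (ε : ℝ) (hε : 0 < ε) (N : ℕ) (hN1 : 1 ≤ N)
    (hNε : 1 ≤ 2 * ε * N) (t : ℝ) (ht0 : 0 ≤ t) (ht1 : t ≤ 1) :
    |t - min (ε * (2 * (min ⌊t / (2 * ε)⌋₊ (N - 1) : ℕ) + 1)) 1| ≤ ε := by
  set f := ⌊t / (2 * ε)⌋₊ with hf
  have h2ε : (0:ℝ) < 2 * ε := by linarith
  rcases le_or_gt f (N - 1) with hle | hlt
  · rw [min_eq_left hle]
    have hfl : (f : ℝ) ≤ t / (2 * ε) := Nat.floor_le (by positivity)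
    have hfu : t / (2 * ε) < f + 1 := Nat.lt_floor_add_one _
    have h1 : 2 * ε * f ≤ t := by
      rw [le_div_iff₀ h2ε] at hfl; linarith
    have h2 : t < 2 * ε * (f + 1) := by
      rw [div_lt_iff₀ h2ε] at hfu; linarith
    rcases le_or_gt (ε * (2 * f + 1)) 1 with hc | hc
    · rw [min_eq_left hc, abs_le]; constructor <;> nlinarith
    · rw [min_eq_right hc.le, abs_le]; constructor <;> nlinarith
  · have hNf : (N : ℝ) ≤ f := by exact_mod_cast by omega
    have hfl : (f : ℝ) ≤ t / (2 * ε) := Nat.floor_le (by positivity)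
    have h1 : 2 * ε * f ≤ t := by
      rw [le_div_iff₀ h2ε] at hfl; linarith
    have ht : t = 1 := le_antisymm ht1 (by nlinarith)
    have hmin : min f (N - 1) = N - 1 := min_eq_right (by omega)
    rw [hmin]
    have hcast : ((N - 1 : ℕ) : ℝ) = (N : ℝ) - 1 := by
      have := Nat.cast_sub hN1 (R := ℝ); simpa using this
    rw [hcast, ht, abs_le]
    rcases le_or_gt (ε * (2 * ((N:ℝ) - 1) + 1)) 1 with hc | hc
    · rw [min_eq_left hc]; constructor <;> nlinarith
    · rw [min_eq_right hc.le]; constructor <;> nlinarith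

open scoped ENNReal in
/-- Abstract (sequence-level) content of Lemma 7.2 of the paper: bounds on a smoothed
spectral sum imply unit-box bounds for the sharp spectral sum. -/
theorem smoothed_to_unit_box_bound (n : ℕ) (hn : 1 ≤ n)
    (lamb : ℕ → EuclideanSpace ℝ (Fin n)) (w : ℕ → ℝ≥0∞)
    (β : EuclideanSpace ℝ (Fin n) → ℝ) (hβ : ∀ τ, 0 ≤ β τ)
    (ε₀ : ℝ) (hε₀ : 0 < ε₀)
    (hβhalf : ∀ τ : EuclideanSpace ℝ (Fin n), (∀ k, |τ k| ≤ ε₀) → (1 / 2 : ℝ) ≤ β τ)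
    (S : Set (EuclideanSpace ℝ (Fin n))) (m : Fin n → ℝ) (hm : ∀ k, 0 ≤ m k)
    (C : ℝ) (hC : 0 < C)
    (hsmooth : ∀ μ : EuclideanSpace ℝ (Fin n), Metric.infDist μ S ≤ Real.sqrt n →
      (∑' j, ENNReal.ofReal (β (lamb j - μ)) * w j) ≤
        ENNReal.ofReal (C * ∏ k, (1 + |μ k|) ^ (m k))) :
    ∃ C' > (0 : ℝ), ∀ μ ∈ S,
      (∑' j, Set.indicator {j : ℕ | ∀ k, lamb j k ∈ Set.Icc (μ k) (μ k + 1)} w j) ≤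
        ENNReal.ofReal (C' * ∏ k, (1 + |μ k|) ^ (m k)) := by
  classical
  set N : ℕ := ⌈1 / (2 * ε₀)⌉₊ with hNdef
  have hN1 : 1 ≤ N := Nat.one_le_iff_ne_zero.mpr (by
    have : (0:ℝ) < 1 / (2 * ε₀) := by positivity
    exact Nat.ceil_pos.mpr this |>.ne')
  have hNε : 1 ≤ 2 * ε₀ * N := by
    have h := Nat.le_ceil (1 / (2 * ε₀))
    have h2ε : (0:ℝ) < 2 * ε₀ := by linarith
    rw [div_le_iff₀ h2ε] at h
    calc (1:ℝ) ≤ (N:ℝ) * (2 * ε₀) := h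
      _ = 2 * ε₀ * N := by ring
  refine ⟨2 * (N:ℝ)^n * C * ∏ k, (2:ℝ) ^ (m k), by positivity, ?_⟩
  intro μ hμS
  -- grid points
  set c : ℕ → ℝ := fun a => min (ε₀ * (2 * a + 1)) 1 with hc
  have hc0 : ∀ a, 0 ≤ c a := fun a => le_min (by positivity) zero_le_one
  have hc1 : ∀ a, c a ≤ 1 := fun a => min_le_right _ _
  set ν : (Fin n → Fin N) → EuclideanSpace ℝ (Fin n) :=
    fun i => WithLp.toLp 2 (fun k => μ k + c (i k)) with hν
  -- each grid point is close to S
  have hνS : ∀ i, Metric.infDist (ν i) S ≤ Real.sqrt n := by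
    intro i
    refine le_trans (Metric.infDist_le_dist_of_mem hμS) ?_
    rw [EuclideanSpace.dist_eq]
    have hsum : ∑ k, dist (ν i k) (μ k) ^ 2 ≤ (n : ℝ) := by
      calc ∑ k, dist (ν i k) (μ k) ^ 2 ≤ ∑ _k : Fin n, (1:ℝ) := by
            refine Finset.sum_le_sum (fun k _ => ?_)
            have h0 := hc0 (i k); have h1 := hc1 (i k)
            have hd : dist (ν i k) (μ k) = |c (i k)| := by
              rw [Real.dist_eq]
              congr 1
              show μ k + c (i k) - μ k = c (i k)
              ring
            rw [hd, abs_of_nonneg h0]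
            nlinarith
        _ = (n : ℝ) := by simp
    exact Real.sqrt_le_sqrt hsum
  -- the smoothed bound at each grid point, transferred to μ
  have hB : ∀ i, (∑' j, ENNReal.ofReal (β (lamb j - ν i)) * w j) ≤
      ENNReal.ofReal (C * ∏ k, (2:ℝ) ^ (m k) * (1 + |μ k|) ^ (m k)) := by
    intro i
    refine (hsmooth (ν i) (hνS i)).trans (ENNReal.ofReal_le_ofReal ?_)
    refine mul_le_mul_of_nonneg_left ?_ hC.le
    refine Finset.prod_le_prod (fun k _ => by positivity) (fun k _ => ?_)
    have h1 : 1 + |ν i k| ≤ 2 * (1 + |μ k|) := by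
      have hrfl : ν i k = μ k + c (i k) := rfl
      rw [hrfl]
      have h2 := hc1 (i k); have h3 := hc0 (i k)
      have h4 : |c (i k)| ≤ 1 := abs_le.mpr ⟨by linarith, h2⟩
      have h5 := abs_add_le (μ k) (c (i k))
      have h6 := abs_nonneg (μ k)
      linarith
    calc (1 + |ν i k|) ^ (m k) ≤ (2 * (1 + |μ k|)) ^ (m k) :=
          Real.rpow_le_rpow (by positivity) h1 (hm k)
      _ = (2:ℝ) ^ (m k) * (1 + |μ k|) ^ (m k) :=
          Real.mul_rpow (by norm_num) (by positivity)
  -- pointwise covering bound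
  have hpoint : ∀ j, Set.indicator {j : ℕ | ∀ k, lamb j k ∈ Set.Icc (μ k) (μ k + 1)} w j ≤
      ∑ i : Fin n → Fin N, 2 * ENNReal.ofReal (β (lamb j - ν i)) * w j := by
    intro j
    by_cases hj : j ∈ {j : ℕ | ∀ k, lamb j k ∈ Set.Icc (μ k) (μ k + 1)}
    · rw [Set.indicator_of_mem hj]
      obtain ⟨i, hi⟩ : ∃ i : Fin n → Fin N, ∀ k, |(lamb j - ν i) k| ≤ ε₀ := by
        rw [Set.mem_setOf_eq] at hj
        have hlt : ∀ a : ℕ, min a (N - 1) < N := fun a => by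
          have := min_le_right a (N - 1); omega
        refine ⟨fun k => ⟨min ⌊(lamb j k - μ k) / (2 * ε₀)⌋₊ (N - 1), hlt _⟩, ?_⟩
        intro k
        have ht0 : 0 ≤ lamb j k - μ k := by have := (hj k).1; linarith
        have ht1 : lamb j k - μ k ≤ 1 := by have := (hj k).2; linarith
        have key := coord_close ε₀ hε₀ N hN1 hNε (lamb j k - μ k) ht0 ht1
        have heq : (lamb j - ν (fun k' => ⟨min ⌊(lamb j k' - μ k') / (2 * ε₀)⌋₊ (N - 1), hlt _⟩)) k
            = (lamb j k - μ k) - c (min ⌊(lamb j k - μ k) / (2 * ε₀)⌋₊ (N - 1)) := by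
          show lamb j k - (μ k + c (min ⌊(lamb j k - μ k) / (2 * ε₀)⌋₊ (N - 1))) = _
          ring
        rw [heq]
        exact key
      have hβi : (1/2 : ℝ) ≤ β (lamb j - ν i) := hβhalf _ hi
      have h1 : (1 : ℝ≥0∞) ≤ 2 * ENNReal.ofReal (β (lamb j - ν i)) := by
        have : ENNReal.ofReal (1/2 : ℝ) ≤ ENNReal.ofReal (β (lamb j - ν i)) :=
          ENNReal.ofReal_le_ofReal hβi
        rw [show ENNReal.ofReal (1/2 : ℝ) = 2⁻¹ by
          rw [ENNReal.ofReal_div_of_pos (by norm_num)]; simp] at this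
        calc (1:ℝ≥0∞) = 2 * 2⁻¹ := by simp [ENNReal.mul_inv_cancel]
          _ ≤ 2 * ENNReal.ofReal (β (lamb j - ν i)) := by
            exact mul_le_mul_right this 2
      calc w j = 1 * w j := (one_mul _).symm
        _ ≤ 2 * ENNReal.ofReal (β (lamb j - ν i)) * w j := mul_le_mul_left h1 _
        _ ≤ ∑ i' : Fin n → Fin N, 2 * ENNReal.ofReal (β (lamb j - ν i')) * w j :=
            Finset.single_le_sum (f := fun i' => 2 * ENNReal.ofReal (β (lamb j - ν i')) * w j)
              (fun _ _ => zero_le) (Finset.mem_univ i)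
    · rw [Set.indicator_of_notMem hj]; exact zero_le
  -- put it together
  calc (∑' j, Set.indicator {j : ℕ | ∀ k, lamb j k ∈ Set.Icc (μ k) (μ k + 1)} w j)
      ≤ ∑' j, ∑ i : Fin n → Fin N, 2 * ENNReal.ofReal (β (lamb j - ν i)) * w j :=
        ENNReal.tsum_le_tsum hpoint
    _ = ∑ i : Fin n → Fin N, ∑' j, 2 * ENNReal.ofReal (β (lamb j - ν i)) * w j :=
        Summable.tsum_finsetSum (fun i _ => ENNReal.summable)
    _ ≤ ∑ i : Fin n → Fin N,
        2 * ENNReal.ofReal (C * ∏ k, (2:ℝ) ^ (m k) * (1 + |μ k|) ^ (m k)) := by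
        refine Finset.sum_le_sum (fun i _ => ?_)
        have : ∑' j, 2 * ENNReal.ofReal (β (lamb j - ν i)) * w j
            = 2 * ∑' j, ENNReal.ofReal (β (lamb j - ν i)) * w j := by
          rw [← ENNReal.tsum_mul_left]
          congr 1; ext j; ring
        rw [this]
        exact mul_le_mul_right (hB i) 2
    _ = (N^n : ℕ) * (2 * ENNReal.ofReal (C * ∏ k, (2:ℝ) ^ (m k) * (1 + |μ k|) ^ (m k))) := by
        rw [Finset.sum_const, Finset.card_univ]
        simp [Fintype.card_fun, nsmul_eq_mul]
    _ ≤ ENNReal.ofReal ((2 * (N:ℝ)^n * C * ∏ k, (2:ℝ) ^ (m k)) * ∏ k, (1 + |μ k|) ^ (m k)) := by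
        have e1 : ((N^n : ℕ) : ℝ≥0∞) = ENNReal.ofReal ((N:ℝ)^n) := by
          rw [← ENNReal.ofReal_natCast (N^n)]
          push_cast
          ring_nf
        have e2 : (2 : ℝ≥0∞) * ENNReal.ofReal (C * ∏ k, (2:ℝ) ^ (m k) * (1 + |μ k|) ^ (m k)) =
            ENNReal.ofReal 2 * ENNReal.ofReal (C * ∏ k, (2:ℝ) ^ (m k) * (1 + |μ k|) ^ (m k)) := by simp
        rw [e1, e2, ← ENNReal.ofReal_mul (by positivity), ← ENNReal.ofReal_mul (by positivity)]
        refine ENNReal.ofReal_le_ofReal (le_of_eq ?_)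
        rw [Finset.prod_mul_distrib]
        ring
end

section
/- Let n ≥ 1, let (λ̄_j)_{j∈ℕ} be a sequence in ℝⁿ with components λ̄_j = (λ_j^{(1)},…,λ_j^{(n)}), and let (w_j)_{j∈ℕ} be nonnegative reals. Let m̄ = (m₁,…,mₙ) ∈ [0,∞)ⁿ and C > 0 be such that ∑_{j : λ̄_j ∈ R_{s̄}} w_j ≤ C ∏_{k=1}^n (1+|s_k|)^{m_k} for every s̄ ∈ ℤⁿ. Fix k ∈ {1,…,n}, fix c̄ = (c₁,…,cₙ) ∈ ℝⁿ with c_ℓ ≠ 0 for every ℓ, and fix an integer N ≥ |m̄| + 2. Then there exists C′ > 0 such that for all λ ≥ 1, ∑_{j=0}^∞ (∏_{ℓ≠k} 𝟙_{[−λ|c_ℓ|, λ|c_ℓ|]}(λ_j^{(ℓ)})) · (1 + | |λ_j^{(k)}| − λ|c_k| |)^{−N} · w_j ≤ C′ λ^{|m̄| + n − 1}. -/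
open scoped ENNReal

lemma BCE_tsum_sq_inv : (∑' p : ℕ, ENNReal.ofReal (((1 + (p : ℝ)) ^ 2)⁻¹)) ≤ 2 := by
  refine Summable.tsum_le_of_sum_le ENNReal.summable fun s => ?_
  obtain ⟨K, hK⟩ := s.exists_nat_subset_range
  calc ∑ p ∈ s, ENNReal.ofReal (((1 + (p : ℝ)) ^ 2)⁻¹)
      ≤ ∑ p ∈ Finset.range K, ENNReal.ofReal (((1 + (p : ℝ)) ^ 2)⁻¹) :=
        Finset.sum_le_sum_of_subset hK
    _ ≤ ∑ p ∈ Finset.range K, ENNReal.ofReal (2 * (((p : ℝ) + 1)⁻¹ - ((p + 1 : ℝ) + 1)⁻¹)) := by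
        refine Finset.sum_le_sum fun p _ => ENNReal.ofReal_le_ofReal ?_
        have h1 : (0 : ℝ) < (p : ℝ) + 1 := by positivity
        have h2 : (0 : ℝ) < (p : ℝ) + 2 := by positivity
        rw [mul_sub]
        rw [show (2 : ℝ) * ((p : ℝ) + 1)⁻¹ - 2 * ((p + 1 : ℝ) + 1)⁻¹
            = (2 * ((p:ℝ)+2) - 2 * ((p:ℝ)+1)) / (((p:ℝ)+1) * ((p:ℝ)+2)) by
          field_simp; ring]
        rw [inv_le_iff_one_le_mul₀ (by positivity)]
        rw [div_mul_eq_mul_div, le_div_iff₀ (by positivity)]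
        ring_nf
        nlinarith [sq_nonneg ((p:ℝ))]
    _ = ENNReal.ofReal (∑ p ∈ Finset.range K, 2 * (((p : ℝ) + 1)⁻¹ - ((p + 1 : ℝ) + 1)⁻¹)) := by
        rw [ENNReal.ofReal_sum_of_nonneg]
        intro p _
        have h1 : ((p + 1 : ℝ) + 1)⁻¹ ≤ ((p : ℝ) + 1)⁻¹ := by
          apply inv_anti₀ (by positivity); linarith
        linarith
    _ ≤ 2 := by
        rw [← Finset.mul_sum]
        have := Finset.sum_range_sub' (fun i => ((i : ℝ) + 1)⁻¹) K
        push_cast at this ⊢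
        rw [this]
        have hK1 : (0:ℝ) ≤ ((K:ℝ)+1)⁻¹ := by positivity
        calc ENNReal.ofReal (2 * ((0+1:ℝ)⁻¹ - ((K:ℝ)+1)⁻¹)) ≤ ENNReal.ofReal 2 := by
              apply ENNReal.ofReal_le_ofReal; nlinarith
          _ = 2 := by norm_num



lemma BCE_real_nine (x : ℝ) (hx : 0 ≤ x) :
    ((1 + max 0 (x - 2)) ^ 2)⁻¹ ≤ 9 * ((1 + x) ^ 2)⁻¹ := by
  have h1 : (0:ℝ) < 1 + max 0 (x - 2) := by
    have := le_max_left (0:ℝ) (x-2); linarith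
  have h2 : (0:ℝ) < 1 + x := by linarith
  rw [show (9:ℝ) * ((1+x)^2)⁻¹ = ((((1+x)/3)^2))⁻¹ by field_simp; ring]
  apply inv_anti₀ (by positivity)
  apply pow_le_pow_left₀ (by positivity)
  rcases le_or_gt x 2 with h | h
  · rw [max_eq_left (by linarith)]; linarith
  · rw [max_eq_right (by linarith)]; linarith

lemma BCE_tsum_nat_decay :
    (∑' p : ℕ, ENNReal.ofReal (((1 + max 0 ((p : ℝ) - 2)) ^ 2)⁻¹)) ≤ 18 := by
  calc (∑' p : ℕ, ENNReal.ofReal (((1 + max 0 ((p : ℝ) - 2)) ^ 2)⁻¹))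
      ≤ ∑' p : ℕ, ENNReal.ofReal 9 * ENNReal.ofReal (((1 + (p : ℝ)) ^ 2)⁻¹) := by
        refine Summable.tsum_le_tsum (fun p => ?_) ENNReal.summable ENNReal.summable
        rw [← ENNReal.ofReal_mul (by norm_num)]
        exact ENNReal.ofReal_le_ofReal (BCE_real_nine p p.cast_nonneg)
    _ = ENNReal.ofReal 9 * ∑' p : ℕ, ENNReal.ofReal (((1 + (p : ℝ)) ^ 2)⁻¹) :=
        ENNReal.tsum_mul_left
    _ ≤ ENNReal.ofReal 9 * 2 := by
        exact mul_le_mul_right BCE_tsum_sq_inv _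
    _ ≤ 18 := by
        rw [show (18:ℝ≥0∞) = ENNReal.ofReal 9 * 2 by
          rw [show (2:ℝ≥0∞) = ENNReal.ofReal 2 by norm_num,
            ← ENNReal.ofReal_mul (by norm_num)]; norm_num]

lemma BCE_tsum_int_decay (a : ℝ) :
    (∑' z : ℤ, ENNReal.ofReal (((1 + max 0 (|(|(z : ℝ)| - a)| - 1)) ^ 2)⁻¹)) ≤ 72 := by
  set M : ℤ := ⌊a⌋ with hM
  have hMa : |a - (M : ℝ)| ≤ 1 := by
    rw [abs_le]
    constructor
    · linarith [Int.floor_le a]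
    · linarith [Int.lt_floor_add_one a]
  -- pointwise bound
  have key : ∀ z : ℤ, ENNReal.ofReal (((1 + max 0 (|(|(z : ℝ)| - a)| - 1)) ^ 2)⁻¹)
      ≤ ENNReal.ofReal (((1 + max 0 (|((z - M : ℤ) : ℝ)| - 2)) ^ 2)⁻¹)
        + ENNReal.ofReal (((1 + max 0 (|((z + M : ℤ) : ℝ)| - 2)) ^ 2)⁻¹) := by
    intro z
    have mono : ∀ u v : ℝ, u ≤ v →
        ENNReal.ofReal (((1 + max 0 v) ^ 2)⁻¹) ≤ ENNReal.ofReal (((1 + max 0 u) ^ 2)⁻¹) := by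
      intro u v huv
      apply ENNReal.ofReal_le_ofReal
      apply inv_anti₀
      · have := le_max_left (0:ℝ) u; positivity
      · apply pow_le_pow_left₀ (by positivity)
        have := max_le_max (le_refl (0:ℝ)) huv; linarith [this]
    rcases le_or_gt 0 z with hz | hz
    · have habs : |(z:ℝ)| = (z:ℝ) := abs_of_nonneg (by exact_mod_cast hz)
      have : |((z - M : ℤ) : ℝ)| - 2 ≤ |(|(z:ℝ)|) - a| - 1 := by
        push_cast
        rw [habs]
        have t := abs_sub_abs_le_abs_sub ((z:ℝ) - M) ((z:ℝ) - a)  -- not quite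
        have : |(z:ℝ) - M| ≤ |(z:ℝ) - a| + |a - M| := by
          calc |(z:ℝ) - M| = |((z:ℝ) - a) + (a - M)| := by ring_nf
            _ ≤ |(z:ℝ) - a| + |a - M| := abs_add_le _ _
        linarith
      exact le_add_right (mono _ _ this)
    · have habs : |(z:ℝ)| = -(z:ℝ) := abs_of_neg (by exact_mod_cast hz)
      have : |((z + M : ℤ) : ℝ)| - 2 ≤ |(|(z:ℝ)|) - a| - 1 := by
        push_cast
        rw [habs]
        have h1 : |(z:ℝ) + M| = |-(z:ℝ) - M| := by rw [← abs_neg]; ring_nf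
        have h2 : |-(z:ℝ) - M| ≤ |-(z:ℝ) - a| + |a - M| := by
          calc |-(z:ℝ) - M| = |(-(z:ℝ) - a) + (a - M)| := by ring_nf
            _ ≤ |-(z:ℝ) - a| + |a - M| := abs_add_le _ _
        rw [h1]
        linarith
      exact le_add_left (mono _ _ this)
  calc (∑' z : ℤ, ENNReal.ofReal (((1 + max 0 (|(|(z : ℝ)| - a)| - 1)) ^ 2)⁻¹))
      ≤ ∑' z : ℤ, (ENNReal.ofReal (((1 + max 0 (|((z - M : ℤ) : ℝ)| - 2)) ^ 2)⁻¹)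
        + ENNReal.ofReal (((1 + max 0 (|((z + M : ℤ) : ℝ)| - 2)) ^ 2)⁻¹)) :=
        Summable.tsum_le_tsum key ENNReal.summable ENNReal.summable
    _ = (∑' z : ℤ, ENNReal.ofReal (((1 + max 0 (|((z - M : ℤ) : ℝ)| - 2)) ^ 2)⁻¹))
        + ∑' z : ℤ, ENNReal.ofReal (((1 + max 0 (|((z + M : ℤ) : ℝ)| - 2)) ^ 2)⁻¹) :=
        ENNReal.tsum_add
    _ ≤ 36 + 36 := by
        have gnat18 := BCE_tsum_nat_decay
        have hZ : (∑' u : ℤ, ENNReal.ofReal (((1 + max 0 (|(u : ℝ)| - 2)) ^ 2)⁻¹)) ≤ 36 := by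
          rw [← tsum_nat_add_neg_add_one (f := fun u : ℤ =>
            ENNReal.ofReal (((1 + max 0 (|(u : ℝ)| - 2)) ^ 2)⁻¹)) ENNReal.summable]
          have hterm : ∀ p : ℕ,
              ENNReal.ofReal (((1 + max 0 (|(((p:ℤ)) : ℝ)| - 2)) ^ 2)⁻¹)
              + ENNReal.ofReal (((1 + max 0 (|(((-((p:ℤ) + 1) : ℤ)) : ℝ)| - 2)) ^ 2)⁻¹)
              ≤ ENNReal.ofReal (((1 + max 0 ((p : ℝ) - 2)) ^ 2)⁻¹)
              + ENNReal.ofReal (((1 + max 0 ((p : ℝ) - 2)) ^ 2)⁻¹) := by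
            intro p
            have e1 : |(((p:ℤ)) : ℝ)| = (p:ℝ) := by push_cast; exact abs_of_nonneg p.cast_nonneg
            have e2 : |(((-((p:ℤ) + 1) : ℤ)) : ℝ)| = (p:ℝ) + 1 := by
              push_cast; rw [abs_neg, abs_of_nonneg (by positivity)]
            refine add_le_add (ENNReal.ofReal_le_ofReal (by rw [e1])) ?_
            apply ENNReal.ofReal_le_ofReal
            rw [e2]
            apply inv_anti₀
            · have := le_max_left (0:ℝ) ((p:ℝ) - 2); positivity
            · have hnn : (0:ℝ) ≤ 1 + max 0 ((p:ℝ) - 2) := by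
                have := le_max_left (0:ℝ) ((p:ℝ) - 2); linarith
              apply pow_le_pow_left₀ hnn
              have : max 0 ((p:ℝ) - 2) ≤ max 0 ((p:ℝ) + 1 - 2) :=
                max_le_max le_rfl (by linarith)
              linarith
          refine le_trans (Summable.tsum_le_tsum (fun p => hterm p) ENNReal.summable ENNReal.summable) ?_
          rw [ENNReal.tsum_add]
          calc _ ≤ (18 : ℝ≥0∞) + 18 := add_le_add gnat18 gnat18
            _ = 36 := by norm_num
        gcongr
        · calc _ = ∑' u : ℤ, ENNReal.ofReal (((1 + max 0 (|(u : ℝ)| - 2)) ^ 2)⁻¹) :=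
              (Equiv.subRight M).tsum_eq (fun u : ℤ => ENNReal.ofReal (((1 + max 0 (|(u : ℝ)| - 2)) ^ 2)⁻¹))
          _ ≤ 36 := hZ
        · calc _ = ∑' u : ℤ, ENNReal.ofReal (((1 + max 0 (|(u : ℝ)| - 2)) ^ 2)⁻¹) :=
              (Equiv.addRight M).tsum_eq (fun u : ℤ => ENNReal.ofReal (((1 + max 0 (|(u : ℝ)| - 2)) ^ 2)⁻¹))
          _ ≤ 36 := hZ
    _ = 72 := by norm_num

lemma BCE_tsum_pi_prod : ∀ (n : ℕ) (h : Fin n → ℤ → ℝ≥0∞),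
    (∑' s : Fin n → ℤ, ∏ l, h l (s l)) = ∏ l, ∑' z, h l z := by
  intro n
  induction n with
  | zero =>
      intro h
      rw [tsum_eq_single (fun l : Fin 0 => (0:ℤ)) (by
        intro b hb; exact absurd (funext fun l => l.elim0) hb)]
      simp
  | succ n ih =>
      intro h
      rw [← (Fin.consEquiv (fun _ : Fin (n+1) => ℤ)).tsum_eq (fun s : Fin (n+1) → ℤ => ∏ l, h l (s l))]
      have : ∀ p : ℤ × (Fin n → ℤ),
          (∏ l, h l ((Fin.consEquiv (fun _ : Fin (n+1) => ℤ) p) l))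
          = h 0 p.1 * ∏ l : Fin n, h l.succ (p.2 l) := by
        intro p
        rw [Fin.prod_univ_succ]
        simp [Fin.consEquiv]
      rw [tsum_congr this,
        show (∑' (b : ℤ × (Fin n → ℤ)), h 0 b.1 * ∏ l : Fin n, h l.succ (b.2 l))
          = ∑' (z : ℤ) (t : Fin n → ℤ), h 0 z * ∏ l : Fin n, h l.succ (t l) from
          ENNReal.tsum_prod (f := fun (z : ℤ) (t : Fin n → ℤ) => h 0 z * ∏ l : Fin n, h l.succ (t l))]
      simp_rw [ENNReal.tsum_mul_left, ENNReal.tsum_mul_right]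
      rw [Fin.prod_univ_succ, ih (fun l => h l.succ)]

lemma BCE_rpow_sum {ι : Type*} (x : ℝ) (hx : 0 < x) (s : Finset ι) (e : ι → ℝ) :
    x ^ (∑ i ∈ s, e i) = ∏ i ∈ s, x ^ e i := by
  induction s using Finset.cons_induction with
  | empty => simp
  | cons a t ha ih =>
      rw [Finset.sum_cons, Finset.prod_cons, Real.rpow_add hx, ih]

/-- Central counting estimate in the proof of the paper's Tauberian Proposition 7.1:
unit-box bounds on the weighted joint spectral counting function imply that the sum with
the sharp cutoff in all but one variable and a polynomially decaying factor in the
remaining variable is `O(λ^{|m|+n-1})`. -/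
theorem box_counting_estimate (n : ℕ) (hn : 1 ≤ n)
    (lamb : ℕ → Fin n → ℝ) (w : ℕ → ℝ≥0∞)
    (m : Fin n → ℝ) (hm : ∀ k, 0 ≤ m k) (C : ℝ) (hC : 0 < C)
    (hbox : ∀ s : Fin n → ℤ,
      (∑' j, Set.indicator
          {j : ℕ | ∀ k, lamb j k ∈ Set.Icc ((s k : ℝ)) ((s k : ℝ) + 1)} w j) ≤
        ENNReal.ofReal (C * ∏ k, (1 + |(s k : ℝ)|) ^ (m k)))
    (k : Fin n) (c : Fin n → ℝ) (hc : ∀ l, c l ≠ 0)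
    (N : ℕ) (hN : (∑ i, m i) + 2 ≤ (N : ℝ)) :
    ∃ C' > (0 : ℝ), ∀ lam : ℝ, 1 ≤ lam →
      (∑' j, (∏ l ∈ Finset.univ.erase k,
            Set.indicator (Set.Icc (-(lam * |c l|)) (lam * |c l|))
              (fun _ => (1 : ℝ≥0∞)) (lamb j l)) *
          ENNReal.ofReal (((1 + |(|lamb j k| - lam * |c k|)|) ^ N)⁻¹) * w j) ≤
        ENNReal.ofReal (C' * lam ^ ((∑ i, m i) + n - 1)) := by
  classical
  have hcabs : ∀ l, 0 < |c l| := fun l => abs_pos.mpr (hc l)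
  set K : Fin n → ℝ := fun l =>
    if l = k then (2 + 2 * |c k|) ^ (m k) * 72 else (2 * |c l| + 3) * (2 + |c l|) ^ (m l)
    with hK
  have hKpos : ∀ l, 0 < K l := by
    intro l
    rw [hK]
    dsimp only
    split_ifs
    · have : (0:ℝ) < (2 + 2 * |c k|) ^ (m k) :=
        Real.rpow_pos_of_pos (by linarith [hcabs k]) _
      linarith
    · have h1 : (0:ℝ) < (2 + |c l|) ^ (m l) :=
        Real.rpow_pos_of_pos (by linarith [hcabs l]) _
      have h2 : (0:ℝ) < 2 * |c l| + 3 := by linarith [hcabs l]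
      positivity
  refine ⟨C * ∏ l, K l, mul_pos hC (Finset.prod_pos (fun l _ => hKpos l)), ?_⟩
  intro lam hlam
  have hlam0 : (0:ℝ) < lam := lt_of_lt_of_le one_pos hlam
  have hal : ∀ l, 0 < lam * |c l| := fun l => mul_pos hlam0 (hcabs l)
  set F : ℕ → ℝ≥0∞ := fun j =>
    (∏ l ∈ Finset.univ.erase k,
        Set.indicator (Set.Icc (-(lam * |c l|)) (lam * |c l|))
          (fun _ => (1 : ℝ≥0∞)) (lamb j l)) *
      ENNReal.ofReal (((1 + |(|lamb j k| - lam * |c k|)|) ^ N)⁻¹) * w j with hF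
  set H : Fin n → ℤ → ℝ≥0∞ := fun l z =>
    if l = k then
      ENNReal.ofReal ((1 + |(z:ℝ)|) ^ (m k)) *
        ENNReal.ofReal (((1 + max 0 (abs (|(z:ℝ)| - lam * |c k|) - 1)) ^ N)⁻¹)
    else
      (if (z:ℝ) ∈ Set.Icc (-(lam * |c l|) - 1) (lam * |c l|) then (1:ℝ≥0∞) else 0) *
        ENNReal.ofReal ((1 + |(z:ℝ)|) ^ (m l)) with hH
  have stepA : (∑' j, F j)
      = ∑' (s : Fin n → ℤ) (j : ℕ), (if (∀ l, ⌊lamb j l⌋ = s l) then F j else 0) := by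
    rw [ENNReal.tsum_comm]
    refine tsum_congr fun j => ?_
    rw [tsum_eq_single (fun l => ⌊lamb j l⌋)
      (fun s hs => if_neg (fun h => hs (funext fun l => (h l).symm)))]
    exact (if_pos (fun l => rfl)).symm
  have stepB : ∀ s : Fin n → ℤ,
      (∑' j : ℕ, (if (∀ l, ⌊lamb j l⌋ = s l) then F j else 0))
        ≤ ENNReal.ofReal C * ∏ l, H l (s l) := by
    intro s
    set D : ℝ≥0∞ :=
      (∏ l ∈ Finset.univ.erase k,
          (if ((s l : ℝ)) ∈ Set.Icc (-(lam * |c l|) - 1) (lam * |c l|) then (1:ℝ≥0∞) else 0)) *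
        ENNReal.ofReal (((1 + max 0 (abs (|((s k : ℤ) : ℝ)| - lam * |c k|) - 1)) ^ N)⁻¹) with hD
    have pointwise : ∀ j : ℕ, (if (∀ l, ⌊lamb j l⌋ = s l) then F j else 0)
        ≤ D * Set.indicator {j : ℕ | ∀ l, lamb j l ∈ Set.Icc ((s l : ℝ)) ((s l : ℝ) + 1)} w j := by
      intro j
      split_ifs with hj
      · have hboxj : ∀ l, lamb j l ∈ Set.Icc ((s l : ℝ)) ((s l : ℝ) + 1) := by
          intro l
          constructor
          · rw [← hj l]; exact Int.floor_le _
          · rw [← hj l]; exact (Int.lt_floor_add_one _).le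
        rw [Set.indicator_of_mem (Set.mem_setOf.mpr hboxj)]
        by_cases hcut : ∀ l ∈ Finset.univ.erase k,
            lamb j l ∈ Set.Icc (-(lam * |c l|)) (lam * |c l|)
        · have h1 : (∏ l ∈ Finset.univ.erase k,
              Set.indicator (Set.Icc (-(lam * |c l|)) (lam * |c l|))
                (fun _ => (1 : ℝ≥0∞)) (lamb j l)) = 1 :=
            Finset.prod_eq_one fun l hl => Set.indicator_of_mem (hcut l hl) _
          have h2 : (∏ l ∈ Finset.univ.erase k,
              (if ((s l : ℝ)) ∈ Set.Icc (-(lam * |c l|) - 1) (lam * |c l|)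
                then (1:ℝ≥0∞) else 0)) = 1 := by
            refine Finset.prod_eq_one fun l hl => if_pos ?_
            have hb := hboxj l
            have hcu := hcut l hl
            constructor
            · linarith [hb.2, hcu.1]
            · linarith [hb.1, hcu.2]
          rw [hF, hD]
          dsimp only
          rw [h1, h2, one_mul, one_mul]
          refine mul_le_mul_left (ENNReal.ofReal_le_ofReal ?_) _
          -- real decay comparison
          set t := lamb j k with ht
          have htk : |t - ((s k : ℤ) : ℝ)| ≤ 1 := by
            have hb := hboxj k
            rw [abs_le]
            exact ⟨by linarith [hb.1], by linarith [hb.2]⟩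
          have h3 : abs (|t| - |((s k : ℤ) : ℝ)|) ≤ 1 :=
            le_trans (abs_abs_sub_abs_le_abs_sub _ _) htk
          have h4 : abs (|((s k : ℤ) : ℝ)| - lam * |c k|) - 1 ≤ abs (|t| - lam * |c k|) := by
            have habs : abs (|((s k : ℤ) : ℝ)| - lam * |c k|)
                ≤ abs (|((s k : ℤ) : ℝ)| - |t|) + abs (|t| - lam * |c k|) := by
              calc abs (|((s k : ℤ) : ℝ)| - lam * |c k|)
                  = abs ((|((s k : ℤ) : ℝ)| - |t|) + (|t| - lam * |c k|)) := by ring_nf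
                _ ≤ _ := abs_add_le _ _
            have : abs (|((s k : ℤ) : ℝ)| - |t|) ≤ 1 := by
              rw [abs_sub_comm]; exact h3
            linarith
          have h5 : 1 + max 0 (abs (|((s k : ℤ) : ℝ)| - lam * |c k|) - 1)
              ≤ 1 + abs (|t| - lam * |c k|) := by
            have := max_le (abs_nonneg (|t| - lam * |c k|)) h4
            linarith
          have hpos : (0:ℝ) < (1 + max 0 (abs (|((s k : ℤ) : ℝ)| - lam * |c k|) - 1)) ^ N := by
            have := le_max_left (0:ℝ) (abs (|((s k : ℤ) : ℝ)| - lam * |c k|) - 1)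
            positivity
          apply inv_anti₀ hpos
          apply pow_le_pow_left₀ (by positivity) h5
        · push_neg at hcut
          obtain ⟨l0, hl0, hnot⟩ := hcut
          have : (∏ l ∈ Finset.univ.erase k,
              Set.indicator (Set.Icc (-(lam * |c l|)) (lam * |c l|))
                (fun _ => (1 : ℝ≥0∞)) (lamb j l)) = 0 :=
            Finset.prod_eq_zero hl0 (Set.indicator_of_notMem hnot _)
          rw [hF]
          dsimp only
          rw [this, zero_mul, zero_mul]
          exact zero_le
      · simp
    calc (∑' j : ℕ, (if (∀ l, ⌊lamb j l⌋ = s l) then F j else 0))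
        ≤ ∑' j : ℕ, D * Set.indicator
            {j : ℕ | ∀ l, lamb j l ∈ Set.Icc ((s l : ℝ)) ((s l : ℝ) + 1)} w j :=
          Summable.tsum_le_tsum pointwise ENNReal.summable ENNReal.summable
      _ = D * ∑' j : ℕ, Set.indicator
            {j : ℕ | ∀ l, lamb j l ∈ Set.Icc ((s l : ℝ)) ((s l : ℝ) + 1)} w j :=
          ENNReal.tsum_mul_left
      _ ≤ D * ENNReal.ofReal (C * ∏ l, (1 + |((s l : ℤ) : ℝ)|) ^ (m l)) :=
          mul_le_mul_right (hbox s) D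
      _ = ENNReal.ofReal C * ∏ l, H l (s l) := by
          rw [ENNReal.ofReal_mul hC.le,
            ENNReal.ofReal_prod_of_nonneg (fun l _ => Real.rpow_nonneg (by positivity) _)]
          rw [← Finset.mul_prod_erase Finset.univ (fun l => H l (s l)) (Finset.mem_univ k),
            ← Finset.mul_prod_erase Finset.univ
              (fun l => ENNReal.ofReal ((1 + |((s l : ℤ) : ℝ)|) ^ (m l))) (Finset.mem_univ k)]
          have hHk : H k (s k) = ENNReal.ofReal ((1 + |((s k : ℤ) : ℝ)|) ^ (m k)) *
              ENNReal.ofReal (((1 + max 0 (abs (|((s k : ℤ) : ℝ)| - lam * |c k|) - 1)) ^ N)⁻¹) := by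
            rw [hH]; dsimp only; rw [if_pos rfl]
          have hHe : (∏ l ∈ Finset.univ.erase k, H l (s l))
              = (∏ l ∈ Finset.univ.erase k,
                  (if ((s l : ℝ)) ∈ Set.Icc (-(lam * |c l|) - 1) (lam * |c l|)
                    then (1:ℝ≥0∞) else 0)) *
                ∏ l ∈ Finset.univ.erase k,
                  ENNReal.ofReal ((1 + |((s l : ℤ) : ℝ)|) ^ (m l)) := by
            rw [← Finset.prod_mul_distrib]
            refine Finset.prod_congr rfl fun l hl => ?_
            rw [hH]; dsimp only; rw [if_neg (Finset.ne_of_mem_erase hl)]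
          rw [hD, hHk, hHe]
          ring
  set e : Fin n → ℝ := fun l => if l = k then m k else m l + 1 with he
  have coord : ∀ l : Fin n, (∑' z : ℤ, H l z) ≤ ENNReal.ofReal (K l * lam ^ (e l)) := by
    intro l
    by_cases hlk : l = k
    · subst hlk
      rw [hK, he]
      dsimp only
      rw [if_pos rfl, if_pos rfl]
      have hmksum : m l ≤ ∑ i, m i :=
        Finset.single_le_sum (f := m) (fun i _ => hm i) (Finset.mem_univ l)
      have key : ∀ z : ℤ, H l z
          ≤ ENNReal.ofReal ((2 + 2 * (lam * |c l|)) ^ (m l)) *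
            ENNReal.ofReal (((1 + max 0 (abs (|(z:ℝ)| - lam * |c l|) - 1)) ^ 2)⁻¹) := by
        intro z
        rw [hH]
        dsimp only
        rw [if_pos rfl]
        set a := lam * |c l| with ha
        set d := max 0 (abs (|(z:ℝ)| - a) - 1) with hd
        have hd0 : 0 ≤ d := le_max_left _ _
        have hA1 : (1:ℝ) ≤ 1 + d := by linarith
        have ha0 : 0 < a := hal l
        rw [← ENNReal.ofReal_mul (Real.rpow_nonneg (by positivity) _),
          ← ENNReal.ofReal_mul (Real.rpow_nonneg (by linarith) _)]
        apply ENNReal.ofReal_le_ofReal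
        have bound1 : 1 + |(z:ℝ)| ≤ (2 + 2 * a) * (1 + d) := by
          have h1 : |(z:ℝ)| - a ≤ abs (|(z:ℝ)| - a) := le_abs_self _
          have h2 : abs (|(z:ℝ)| - a) - 1 ≤ d := le_max_right _ _
          nlinarith
        have brpow : (1 + |(z:ℝ)|) ^ (m l) ≤ (2 + 2*a) ^ (m l) * (1 + d) ^ (m l) := by
          rw [← Real.mul_rpow (by linarith) (by linarith)]
          exact Real.rpow_le_rpow (by positivity) bound1 (hm l)
        have bdecay : (1 + d) ^ (m l) * (((1 + d) ^ N)⁻¹) ≤ (((1 + d) ^ 2)⁻¹) := by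
          rw [show ((1 + d) ^ N) = (1 + d) ^ ((N:ℕ):ℝ) from (Real.rpow_natCast _ N).symm,
            show ((1 + d) ^ 2) = (1 + d) ^ ((2:ℕ):ℝ) from (Real.rpow_natCast _ 2).symm,
            ← Real.rpow_neg (by linarith), ← Real.rpow_neg (by linarith),
            ← Real.rpow_add (by linarith)]
          apply Real.rpow_le_rpow_of_exponent_le hA1
          push_cast
          linarith
        calc (1 + |(z:ℝ)|) ^ (m l) * (((1 + d) ^ N)⁻¹)
            ≤ ((2 + 2*a) ^ (m l) * (1 + d) ^ (m l)) * (((1 + d) ^ N)⁻¹) := by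
              apply mul_le_mul_of_nonneg_right brpow
              positivity
          _ = (2 + 2*a) ^ (m l) * ((1 + d) ^ (m l) * (((1 + d) ^ N)⁻¹)) := by ring
          _ ≤ (2 + 2*a) ^ (m l) * (((1 + d) ^ 2)⁻¹) := by
              apply mul_le_mul_of_nonneg_left bdecay
              exact Real.rpow_nonneg (by linarith) _
      calc (∑' z : ℤ, H l z)
          ≤ ∑' z : ℤ, ENNReal.ofReal ((2 + 2 * (lam * |c l|)) ^ (m l)) *
              ENNReal.ofReal (((1 + max 0 (abs (|(z:ℝ)| - lam * |c l|) - 1)) ^ 2)⁻¹) :=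
            Summable.tsum_le_tsum key ENNReal.summable ENNReal.summable
        _ = ENNReal.ofReal ((2 + 2 * (lam * |c l|)) ^ (m l)) *
            ∑' z : ℤ, ENNReal.ofReal (((1 + max 0 (abs (|(z:ℝ)| - lam * |c l|) - 1)) ^ 2)⁻¹) :=
            ENNReal.tsum_mul_left
        _ ≤ ENNReal.ofReal ((2 + 2 * (lam * |c l|)) ^ (m l)) * 72 :=
            mul_le_mul_right (BCE_tsum_int_decay (lam * |c l|)) _
        _ ≤ ENNReal.ofReal ((2 + 2 * |c l|) ^ (m l) * 72 * lam ^ (m l)) := by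
            rw [show (72:ℝ≥0∞) = ENNReal.ofReal 72 by norm_num,
              ← ENNReal.ofReal_mul (Real.rpow_nonneg (by positivity) _)]
            apply ENNReal.ofReal_le_ofReal
            have hbase : 2 + 2 * (lam * |c l|) ≤ lam * (2 + 2 * |c l|) := by nlinarith [hcabs l]
            have h := Real.rpow_le_rpow (by positivity) hbase (hm l)
            rw [Real.mul_rpow hlam0.le (by positivity)] at h
            nlinarith [Real.rpow_nonneg (show (0:ℝ) ≤ 2 + 2*|c l| by positivity) (m l),
              Real.rpow_nonneg hlam0.le (m l),
              Real.rpow_pos_of_pos hlam0 (m l)]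
    · rw [hK, he]
      dsimp only
      rw [if_neg hlk, if_neg hlk]
      have hsupp : ∀ z ∉ Finset.Icc ⌈-(lam * |c l|) - 1⌉ ⌊lam * |c l|⌋, H l z = 0 := by
        intro z hz
        rw [Finset.mem_Icc, not_and_or] at hz
        rw [hH]
        dsimp only
        rw [if_neg hlk]
        rcases hz with hz | hz
        · push_neg at hz
          have : (z:ℝ) < -(lam * |c l|) - 1 := Int.lt_ceil.mp hz
          rw [if_neg (fun hmem => absurd hmem.1 (not_le.mpr this)), zero_mul]
        · push_neg at hz
          have : lam * |c l| < (z:ℝ) := Int.floor_lt.mp hz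
          rw [if_neg (fun hmem => absurd hmem.2 (not_le.mpr this)), zero_mul]
      rw [tsum_eq_sum hsupp]
      have hterm : ∀ z ∈ Finset.Icc ⌈-(lam * |c l|) - 1⌉ ⌊lam * |c l|⌋,
          H l z ≤ ENNReal.ofReal ((2 + lam * |c l|) ^ (m l)) := by
        intro z hz
        rw [Finset.mem_Icc] at hz
        have hz1 : -(lam * |c l|) - 1 ≤ (z:ℝ) :=
          le_trans (Int.le_ceil _) (by exact_mod_cast hz.1)
        have hz2 : (z:ℝ) ≤ lam * |c l| :=
          le_trans (by exact_mod_cast hz.2) (Int.floor_le _)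
        have habs : |(z:ℝ)| ≤ lam * |c l| + 1 :=
          abs_le.mpr ⟨by linarith, by linarith⟩
        rw [hH]
        dsimp only
        rw [if_neg hlk]
        calc _ ≤ (1:ℝ≥0∞) * ENNReal.ofReal ((1 + |(z:ℝ)|) ^ (m l)) := by
              apply mul_le_mul_left
              split_ifs
              · exact le_rfl
              · exact zero_le
          _ = ENNReal.ofReal ((1 + |(z:ℝ)|) ^ (m l)) := one_mul _
          _ ≤ ENNReal.ofReal ((2 + lam * |c l|) ^ (m l)) := by
              apply ENNReal.ofReal_le_ofReal
              exact Real.rpow_le_rpow (by positivity) (by linarith) (hm l)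
      have card_le : (((Finset.Icc ⌈-(lam * |c l|) - 1⌉ ⌊lam * |c l|⌋).card : ℕ) : ℝ)
          ≤ 2 * (lam * |c l|) + 3 := by
        rw [Int.card_Icc]
        rcases le_or_gt 0 (⌊lam * |c l|⌋ + 1 - ⌈-(lam * |c l|) - 1⌉) with h | h
        · rw [show ((((⌊lam * |c l|⌋ + 1 - ⌈-(lam * |c l|) - 1⌉).toNat : ℕ)) : ℝ)
              = (((⌊lam * |c l|⌋ + 1 - ⌈-(lam * |c l|) - 1⌉) : ℤ) : ℝ) by
            exact_mod_cast congrArg Int.cast (Int.toNat_of_nonneg h)]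
          push_cast
          have h1 : (⌊lam * |c l|⌋ : ℝ) ≤ lam * |c l| := Int.floor_le _
          have h2 : -(lam * |c l|) - 1 ≤ (⌈-(lam * |c l|) - 1⌉ : ℝ) := Int.le_ceil _
          linarith
        · rw [Int.toNat_of_nonpos h.le]
          norm_num
          nlinarith [hal l]
      calc ∑ z ∈ Finset.Icc ⌈-(lam * |c l|) - 1⌉ ⌊lam * |c l|⌋, H l z
          ≤ (Finset.Icc ⌈-(lam * |c l|) - 1⌉ ⌊lam * |c l|⌋).card •
            ENNReal.ofReal ((2 + lam * |c l|) ^ (m l)) :=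
            Finset.sum_le_card_nsmul _ _ _ hterm
        _ = ((((Finset.Icc ⌈-(lam * |c l|) - 1⌉ ⌊lam * |c l|⌋).card : ℕ)) : ℝ≥0∞) *
            ENNReal.ofReal ((2 + lam * |c l|) ^ (m l)) := by
            rw [nsmul_eq_mul]
        _ = ENNReal.ofReal (((((Finset.Icc ⌈-(lam * |c l|) - 1⌉ ⌊lam * |c l|⌋).card : ℕ)) : ℝ) *
            (2 + lam * |c l|) ^ (m l)) := by
            rw [ENNReal.ofReal_mul (by positivity), ENNReal.ofReal_natCast]
        _ ≤ ENNReal.ofReal ((2 * |c l| + 3) * (2 + |c l|) ^ (m l) * lam ^ (m l + 1)) := by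
            apply ENNReal.ofReal_le_ofReal
            have hbase : 2 + lam * |c l| ≤ lam * (2 + |c l|) := by nlinarith [hcabs l]
            have h := Real.rpow_le_rpow (by positivity) hbase (hm l)
            rw [Real.mul_rpow hlam0.le (by positivity)] at h
            have hcard := card_le
            have hexp : lam ^ (m l + 1) = lam ^ (m l) * lam := by
              rw [Real.rpow_add hlam0, Real.rpow_one]
            rw [hexp]
            have hrp1 : (0:ℝ) ≤ (2 + lam * |c l|) ^ (m l) := Real.rpow_nonneg (by positivity) _
            have hrp2 : (0:ℝ) ≤ lam ^ (m l) := Real.rpow_nonneg hlam0.le _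
            have hrp3 : (0:ℝ) ≤ (2 + |c l|) ^ (m l) := Real.rpow_nonneg (by positivity) _
            have hcl : 0 < |c l| := hcabs l
            have hcount : (((Finset.Icc ⌈-(lam * |c l|) - 1⌉ ⌊lam * |c l|⌋).card : ℕ) : ℝ)
                ≤ lam * (2 * |c l| + 3) := by nlinarith
            calc ((((Finset.Icc ⌈-(lam * |c l|) - 1⌉ ⌊lam * |c l|⌋).card : ℕ)) : ℝ) *
                (2 + lam * |c l|) ^ (m l)
                ≤ (lam * (2 * |c l| + 3)) * (lam ^ (m l) * (2 + |c l|) ^ (m l)) := by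
                  apply mul_le_mul hcount h hrp1 (by positivity)
              _ = (2 * |c l| + 3) * (2 + |c l|) ^ (m l) * (lam ^ (m l) * lam) := by ring
  have hsum_e : (∑ l, e l) = (∑ i, m i) + n - 1 := by
    have h1 : ∀ l : Fin n, e l = m l + (if l = k then 0 else 1) := by
      intro l
      rw [he]
      dsimp only
      split_ifs with h
      · rw [h]; ring
      · ring
    rw [Finset.sum_congr rfl (fun l _ => h1 l), Finset.sum_add_distrib]
    have h2 : (∑ l : Fin n, (if l = k then (0:ℝ) else 1)) = n - 1 := by
      have h3 : ∀ l : Fin n, (if l = k then (0:ℝ) else 1) = 1 - (if l = k then 1 else 0) := by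
        intro l; split_ifs <;> ring
      rw [Finset.sum_congr rfl (fun l _ => h3 l), Finset.sum_sub_distrib,
        Finset.sum_const, Finset.sum_ite_eq' Finset.univ k (fun _ => (1:ℝ))]
      simp [Finset.card_univ]
    rw [h2]
    ring
  calc (∑' j, F j)
      = ∑' (s : Fin n → ℤ) (j : ℕ), (if (∀ l, ⌊lamb j l⌋ = s l) then F j else 0) := stepA
    _ ≤ ∑' (s : Fin n → ℤ), ENNReal.ofReal C * ∏ l, H l (s l) :=
        Summable.tsum_le_tsum stepB ENNReal.summable ENNReal.summable
    _ = ENNReal.ofReal C * ∑' (s : Fin n → ℤ), ∏ l, H l (s l) := ENNReal.tsum_mul_left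
    _ = ENNReal.ofReal C * ∏ l, ∑' z : ℤ, H l z := by rw [BCE_tsum_pi_prod]
    _ ≤ ENNReal.ofReal C * ∏ l, ENNReal.ofReal (K l * lam ^ (e l)) :=
        mul_le_mul_right (Finset.prod_le_prod' fun l _ => coord l) _
    _ = ENNReal.ofReal ((C * ∏ l, K l) * lam ^ ((∑ i, m i) + n - 1)) := by
        rw [← ENNReal.ofReal_prod_of_nonneg
          (fun l _ => mul_nonneg (hKpos l).le (Real.rpow_nonneg hlam0.le _)),
          ← ENNReal.ofReal_mul hC.le]
        congr 1
        rw [Finset.prod_mul_distrib, ← BCE_rpow_sum lam hlam0, hsum_e]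
        ring
end

section
/- Let n ≥ 1 and let (λ̄_j)_{j∈ℕ} be a sequence in ℝⁿ. Let (u_j) and (v_j) be sequences of complex numbers, m̄ = (m₁,…,mₙ) ∈ [0,∞)ⁿ and C > 0 such that for every s̄ ∈ ℤⁿ one has ∑_{j : λ̄_j ∈ R_{s̄}} |u_j|² ≤ C ∏_{k=1}^n (1+|s_k|)^{m_k} and ∑_{j : λ̄_j ∈ R_{s̄}} |v_j|² ≤ C ∏_{k=1}^n (1+|s_k|)^{m_k}. Let ρ : ℝ → ℝ be measurable, rapidly decreasing, with ∫_ℝ ρ = 1, and let c̄ = (c₁,…,cₙ) ∈ ℝⁿ have all components nonzero. For λ ≥ 1 and μ̄ ∈ ℝⁿ define h_λ(μ̄) = ∏_{k=1}^n 𝟙_{[−λ|c_k|, λ|c_k|]}(μ_k) − ∏_{k=1}^n ∫_{μ_k − λ|c_k|}^{μ_k + λ|c_k|} ρ(s) ds. Then there exists C′ > 0 such that for all λ ≥ 1, ∑_{j=0}^∞ |h_λ(λ̄_j)| · |u_j| · |v_j| ≤ C′ λ^{|m̄| + n − 1}. -/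
open scoped ENNReal
open MeasureTheory Set

namespace TaubAux



noncomputable def Phi (z : ℤ) : ℝ := ((1 + |(z : ℝ)|) ^ 2)⁻¹

lemma Phi_nonneg (z : ℤ) : 0 ≤ Phi z := by
  unfold Phi; positivity

lemma summable_Phi : Summable Phi := by
  have hnat : Summable (fun n : ℕ => ((1 + (n : ℝ)) ^ 2)⁻¹) := by
    have h0 : Summable (fun n : ℕ => (((n : ℝ)) ^ 2)⁻¹) := Real.summable_nat_pow_inv.2 one_lt_two
    have := (summable_nat_add_iff (f := fun n : ℕ => (((n : ℝ)) ^ 2)⁻¹) 1).2 h0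
    refine this.congr fun n => ?_
    push_cast; ring_nf
  refine Summable.of_nat_of_neg ?_ ?_ <;>
    · refine hnat.congr fun n => ?_
      unfold Phi
      push_cast
      simp [abs_of_nonneg, Nat.cast_nonneg]

noncomputable def Zr : ℝ := ∑' z, Phi z

lemma Zr_nonneg : 0 ≤ Zr := tsum_nonneg Phi_nonneg

lemma tsum_ofReal_Phi : (∑' z : ℤ, ENNReal.ofReal (Phi z)) = ENNReal.ofReal Zr :=
  (ENNReal.ofReal_tsum_of_nonneg Phi_nonneg summable_Phi).symm

lemma tsum_ofReal_Phi_sub (p : ℤ) :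
    (∑' z : ℤ, ENNReal.ofReal (Phi (z - p))) = ENNReal.ofReal Zr := by
  rw [← tsum_ofReal_Phi]
  exact Equiv.tsum_eq (Equiv.subRight p) (fun w => ENNReal.ofReal (Phi w))

lemma tsum_ofReal_Phi_add (p : ℤ) :
    (∑' z : ℤ, ENNReal.ofReal (Phi (z + p))) = ENNReal.ofReal Zr := by
  rw [← tsum_ofReal_Phi]
  exact Equiv.tsum_eq (Equiv.addRight p) (fun w => ENNReal.ofReal (Phi w))

lemma tsum_ofReal_chi (P : ℤ) (hP : 0 ≤ P) :
    (∑' z : ℤ, ENNReal.ofReal (if |z| ≤ P then (1 : ℝ) else 0)) ≤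
      ENNReal.ofReal (2 * (P : ℝ) + 1) := by
  have h0 : ∀ z ∉ Finset.Icc (-P) P,
      ENNReal.ofReal (if |z| ≤ P then (1 : ℝ) else 0) = 0 := by
    intro z hz
    rw [Finset.mem_Icc, ← abs_le] at hz
    simp [hz]
  rw [tsum_eq_sum h0]
  have hle : ∀ z ∈ Finset.Icc (-P) P,
      ENNReal.ofReal (if |z| ≤ P then (1 : ℝ) else 0) = 1 := by
    intro z hz
    rw [Finset.mem_Icc, ← abs_le] at hz
    simp [hz]
  rw [Finset.sum_congr rfl hle, Finset.sum_const, Int.card_Icc]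
  rw [nsmul_eq_mul, mul_one]
  rw [show ((P + 1 - -P).toNat : ℝ≥0∞) = ENNReal.ofReal (((P + 1 - -P).toNat : ℝ)) by
    simp [ENNReal.ofReal_natCast]]
  apply ENNReal.ofReal_le_ofReal
  have h1 : (0 : ℤ) ≤ P + 1 - -P := by omega
  have h2 : (((P + 1 - -P).toNat : ℕ) : ℝ) = 2 * (P : ℝ) + 1 := by
    rw [← Int.cast_natCast, Int.toNat_of_nonneg h1]; push_cast; ring
  rw [h2]

lemma tsum_pi_prod : ∀ {n : ℕ} (f : Fin n → ℤ → ℝ≥0∞),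
    (∑' s : Fin n → ℤ, ∏ k, f k (s k)) = ∏ k, ∑' z, f k z := by
  intro n
  induction n with
  | zero =>
    intro f
    simp only [Finset.univ_eq_empty, Finset.prod_empty]
    exact tsum_eq_single (fun i => i.elim0) (fun b' hb' => absurd (funext fun i => i.elim0) hb')
  | succ n ih =>
    intro f
    have he := Equiv.tsum_eq (Fin.consEquiv fun _ => ℤ)
      (fun s : Fin (n + 1) → ℤ => ∏ k, f k (s k))
    rw [← he, ENNReal.tsum_prod']
    have hterm : ∀ (z : ℤ) (t : Fin n → ℤ),
        (∏ k, f k (((Fin.consEquiv fun _ => ℤ) (z, t)) k)) =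
          f 0 z * ∏ k : Fin n, f k.succ (t k) := by
      intro z t
      simp [Fin.prod_univ_succ]
    calc (∑' (z : ℤ) (t : Fin n → ℤ), ∏ k, f k (((Fin.consEquiv fun _ => ℤ) (z, t)) k))
        = ∑' (z : ℤ), f 0 z * ∑' t : Fin n → ℤ, ∏ k : Fin n, f k.succ (t k) := by
          apply tsum_congr; intro z
          rw [← ENNReal.tsum_mul_left]
          apply tsum_congr; intro t
          exact hterm z t
      _ = (∑' z : ℤ, f 0 z) * ∑' t : Fin n → ℤ, ∏ k : Fin n, f k.succ (t k) :=
          ENNReal.tsum_mul_right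
      _ = ∏ k, ∑' z, f k z := by
          rw [ih (fun k => f k.succ), Fin.prod_univ_succ]



lemma abs_prod_sub_prod {ι : Type*} [DecidableEq ι] (s : Finset ι) (x y M D : ι → ℝ)
    (hx : ∀ i ∈ s, |x i| ≤ M i) (hy : ∀ i ∈ s, |y i| ≤ M i)
    (hD : ∀ i ∈ s, |x i - y i| ≤ D i) :
    |(∏ i ∈ s, x i) - ∏ i ∈ s, y i| ≤ ∑ i ∈ s, D i * ∏ l ∈ s.erase i, M l := by
  induction s using Finset.cons_induction with
  | empty => simp
  | cons a t ha ih =>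
    have hMa : 0 ≤ M a := le_trans (abs_nonneg _) (hx a (Finset.mem_cons_self a t))
    have hDnn : 0 ≤ D a := le_trans (abs_nonneg _) (hD a (Finset.mem_cons_self a t))
    rw [Finset.prod_cons, Finset.prod_cons, Finset.sum_cons, Finset.erase_cons]
    have hPy : |∏ i ∈ t, y i| ≤ ∏ i ∈ t, M i := by
      rw [Finset.abs_prod]
      exact Finset.prod_le_prod (fun i _ => abs_nonneg _)
        (fun i hi => hy i (Finset.mem_cons_of_mem hi))
    have hS := ih (fun i hi => hx i (Finset.mem_cons_of_mem hi))
      (fun i hi => hy i (Finset.mem_cons_of_mem hi))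
      (fun i hi => hD i (Finset.mem_cons_of_mem hi))
    have key : |x a * ∏ i ∈ t, x i - y a * ∏ i ∈ t, y i| ≤
        |x a| * |(∏ i ∈ t, x i) - ∏ i ∈ t, y i| + |x a - y a| * |∏ i ∈ t, y i| := by
      have hid : x a * ∏ i ∈ t, x i - y a * ∏ i ∈ t, y i =
          x a * ((∏ i ∈ t, x i) - ∏ i ∈ t, y i) + (x a - y a) * ∏ i ∈ t, y i := by ring
      rw [hid]
      exact (abs_add_le _ _).trans (by rw [abs_mul, abs_mul])
    have h1 : |x a| * |(∏ i ∈ t, x i) - ∏ i ∈ t, y i| ≤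
        M a * ∑ i ∈ t, D i * ∏ l ∈ t.erase i, M l :=
      mul_le_mul (hx a (Finset.mem_cons_self a t)) hS (abs_nonneg _) hMa
    have h2 : |x a - y a| * |∏ i ∈ t, y i| ≤ D a * ∏ i ∈ t, M i :=
      mul_le_mul (hD a (Finset.mem_cons_self a t)) hPy (abs_nonneg _) hDnn
    have hsum : (∑ i ∈ t, D i * ∏ l ∈ (Finset.cons a t ha).erase i, M l)
        = M a * ∑ i ∈ t, D i * ∏ l ∈ t.erase i, M l := by
      rw [Finset.mul_sum]
      apply Finset.sum_congr rfl
      intro i hi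
      have hne : a ≠ i := fun h => ha (h ▸ hi)
      rw [Finset.cons_eq_insert, Finset.erase_insert_of_ne hne,
        Finset.prod_insert (fun h => ha (Finset.mem_of_mem_erase h))]
      ring
    rw [hsum]
    linarith




lemma integrable_inv_one_add_sq : Integrable (fun s : ℝ => ((1 + |s|) ^ 2)⁻¹) := by
  have h := integrable_one_add_norm (E := ℝ) (μ := volume) (r := 2) (by norm_num)
  refine h.congr' ?_ (ae_of_all _ fun s => ?_)
  · exact (Measurable.aestronglyMeasurable (by fun_prop))
  · have h1 : (0:ℝ) < 1 + ‖s‖ := by positivity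
    rw [Real.norm_eq_abs, Real.rpow_neg h1.le, Real.norm_eq_abs, Real.rpow_two]
    rw [abs_of_nonneg (by positivity), Real.norm_eq_abs]
    exact (abs_of_nonneg (by positivity)).symm

noncomputable def B2 : ℝ := ∫ s : ℝ, ((1 + |s|) ^ 2)⁻¹

lemma B2_nonneg : 0 ≤ B2 := integral_nonneg fun s => by positivity

section rho

variable {ρ : ℝ → ℝ} {Q : ℕ} {A : ℝ} (hmeas : Measurable ρ)
  (hA : ∀ s, |ρ s| ≤ A * ((1 + |s|) ^ (Q + 2))⁻¹)

include hA

lemma A_nonneg : 0 ≤ A := by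
  have := (abs_nonneg (ρ 0)).trans (hA 0)
  simpa using this

include hmeas

lemma rho_ptwise (d : ℝ) (hd : 0 ≤ d) (s : ℝ) (hs : d ≤ |s|) :
    |ρ s| ≤ A * ((1 + d) ^ Q)⁻¹ * ((1 + |s|) ^ 2)⁻¹ := by
  have hA0 : 0 ≤ A := A_nonneg hA
  calc |ρ s| ≤ A * ((1 + |s|) ^ (Q + 2))⁻¹ := hA s
    _ = A * ((1 + |s|) ^ Q)⁻¹ * ((1 + |s|) ^ 2)⁻¹ := by
        rw [pow_add, mul_inv, mul_assoc]
    _ ≤ A * ((1 + d) ^ Q)⁻¹ * ((1 + |s|) ^ 2)⁻¹ := by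
        have h2 : (1 + d) ^ Q ≤ (1 + |s|) ^ Q :=
          pow_le_pow_left₀ (by linarith) (by linarith) Q
        have h3 : ((1 + |s|) ^ Q)⁻¹ ≤ ((1 + d) ^ Q)⁻¹ := by
          apply inv_anti₀ (by positivity) h2
        have h4 : (0:ℝ) ≤ ((1 + |s|) ^ 2)⁻¹ := by positivity
        have h5 := mul_le_mul_of_nonneg_left h3 hA0
        exact mul_le_mul_of_nonneg_right h5 h4

lemma integrable_rho : Integrable ρ := by
  refine (integrable_inv_one_add_sq.const_mul A).mono' hmeas.aestronglyMeasurable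
    (ae_of_all _ fun s => ?_)
  rw [Real.norm_eq_abs]
  have := rho_ptwise hmeas hA 0 le_rfl s (abs_nonneg s)
  simpa using this

lemma tail_bound (d : ℝ) (hd : 0 ≤ d) (S : Set ℝ) (hSm : MeasurableSet S)
    (hS : ∀ s ∈ S, d ≤ |s|) :
    (∫ s in S, |ρ s|) ≤ A * B2 * ((1 + d) ^ Q)⁻¹ := by
  have hint2 : Integrable (fun s : ℝ => A * ((1 + d) ^ Q)⁻¹ * ((1 + |s|) ^ 2)⁻¹) :=
    integrable_inv_one_add_sq.const_mul _
  calc (∫ s in S, |ρ s|)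
      ≤ ∫ s in S, A * ((1 + d) ^ Q)⁻¹ * ((1 + |s|) ^ 2)⁻¹ :=
        setIntegral_mono_on ((integrable_rho hmeas hA).abs.integrableOn) hint2.integrableOn
          hSm (fun s hs => rho_ptwise hmeas hA d hd s (hS s hs))
    _ ≤ ∫ s : ℝ, A * ((1 + d) ^ Q)⁻¹ * ((1 + |s|) ^ 2)⁻¹ :=
        setIntegral_le_integral hint2 (ae_of_all _ fun s =>
          mul_nonneg (mul_nonneg (A_nonneg hA) (by positivity)) (by positivity))
    _ = A * B2 * ((1 + d) ^ Q)⁻¹ := by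
        rw [integral_const_mul]
        unfold B2; ring

noncomputable def B0 (ρ : ℝ → ℝ) : ℝ := ∫ s : ℝ, |ρ s|

omit hmeas hA in
lemma B0_nonneg : 0 ≤ B0 ρ := integral_nonneg fun _ => abs_nonneg _

variable {a : ℝ} (ha : 0 ≤ a)

include ha

lemma F_le_B0 (t : ℝ) : |∫ s in (t - a)..(t + a), ρ s| ≤ B0 ρ := by
  rw [intervalIntegral.integral_of_le (by linarith)]
  have h1 : |∫ s in Ioc (t - a) (t + a), ρ s| ≤ ∫ s in Ioc (t - a) (t + a), |ρ s| := by
    simpa [Real.norm_eq_abs] using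
      norm_integral_le_integral_norm (μ := volume.restrict (Ioc (t - a) (t + a))) ρ
  refine h1.trans (setIntegral_le_integral (integrable_rho hmeas hA).abs
    (ae_of_all _ fun s => abs_nonneg _))

lemma F_tail (t : ℝ) (h : a < |t|) :
    |∫ s in (t - a)..(t + a), ρ s| ≤ A * B2 * ((1 + (|t| - a)) ^ Q)⁻¹ := by
  rw [intervalIntegral.integral_of_le (by linarith)]
  have h1 : |∫ s in Ioc (t - a) (t + a), ρ s| ≤ ∫ s in Ioc (t - a) (t + a), |ρ s| := by
    simpa [Real.norm_eq_abs] using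
      norm_integral_le_integral_norm (μ := volume.restrict (Ioc (t - a) (t + a))) ρ
  refine h1.trans (tail_bound hmeas hA (|t| - a) (by linarith) _ measurableSet_Ioc ?_)
  intro s hs
  rcases le_or_gt 0 t with ht | ht
  · rw [abs_of_nonneg ht] at *
    have : t - a < s := hs.1
    have hs0 : 0 < s := by linarith
    rw [abs_of_pos hs0]; linarith
  · rw [abs_of_neg ht] at *
    have : s ≤ t + a := hs.2
    have hs0 : s < 0 := by linarith
    rw [abs_of_neg hs0]; linarith

lemma F_bound (t : ℝ) :
    |∫ s in (t - a)..(t + a), ρ s| ≤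
      (B0 ρ + A * B2 + 1) * ((1 + max 0 (|t| - a)) ^ Q)⁻¹ := by
  have hA0 : 0 ≤ A := A_nonneg hA
  rcases le_or_gt (|t|) a with h | h
  · rw [max_eq_left (by linarith)]
    simpa using (F_le_B0 hmeas hA ha t).trans (by nlinarith [B2_nonneg, @B0_nonneg ρ])
  · rw [max_eq_right (by linarith)]
    refine (F_tail hmeas hA ha t h).trans ?_
    have h0 : (0:ℝ) ≤ ((1 + (|t| - a)) ^ Q)⁻¹ :=
      inv_nonneg.2 (pow_nonneg (by linarith) _)
    have h1 : A * B2 ≤ B0 ρ + A * B2 + 1 := by nlinarith [@B0_nonneg ρ]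
    exact mul_le_mul_of_nonneg_right h1 h0

lemma Ind_eq_one {t : ℝ} (h : |t| ≤ a) :
    Set.indicator (Icc (-a) a) (fun _ => (1:ℝ)) t = 1 :=
  Set.indicator_of_mem (by rw [mem_Icc]; constructor <;> [linarith [neg_abs_le t]; linarith [le_abs_self t]]) _

omit hmeas hA ha in
lemma Ind_eq_zero {t : ℝ} (h : a < |t|) :
    Set.indicator (Icc (-a) a) (fun _ => (1:ℝ)) t = 0 := by
  apply Set.indicator_of_notMem
  rw [mem_Icc]
  intro hm
  rcases abs_cases t with ⟨he, _⟩ | ⟨he, _⟩ <;> rw [he] at h <;> linarith [hm.1, hm.2]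

omit ha in
lemma abs_setInt_le (S : Set ℝ) : |∫ s in S, ρ s| ≤ ∫ s in S, |ρ s| := by
  simpa [Real.norm_eq_abs] using
    norm_integral_le_integral_norm (μ := volume.restrict S) ρ

lemma diff_bound (hint : (∫ s : ℝ, ρ s) = 1) (t : ℝ) :
    |Set.indicator (Icc (-a) a) (fun _ => (1:ℝ)) t - ∫ s in (t - a)..(t + a), ρ s| ≤
      2 * (A * B2) * ((1 + |(|t| - a)|) ^ Q)⁻¹ := by
  have hig := integrable_rho hmeas hA
  rcases le_or_gt (|t|) a with h | h
  · rw [Ind_eq_one hmeas hA ha h]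
    have hle : t - a ≤ t + a := by linarith
    have hsplit : (∫ s : ℝ, ρ s) = (∫ s in Iic (t - a), ρ s) +
        ((∫ s in Ioc (t - a) (t + a), ρ s) + ∫ s in Ioi (t + a), ρ s) := by
      rw [← setIntegral_union (Set.Ioc_disjoint_Ioi le_rfl) measurableSet_Ioi
          hig.integrableOn hig.integrableOn,
        Set.Ioc_union_Ioi_eq_Ioi hle,
        ← setIntegral_union (Set.Iic_disjoint_Ioi le_rfl) measurableSet_Ioi
          hig.integrableOn hig.integrableOn,
        Set.Iic_union_Ioi, setIntegral_univ]
    rw [intervalIntegral.integral_of_le hle]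
    have heq : 1 - (∫ s in Ioc (t - a) (t + a), ρ s) =
        (∫ s in Iic (t - a), ρ s) + ∫ s in Ioi (t + a), ρ s := by
      rw [← hint, hsplit]; ring
    rw [heq]
    have hd : (0:ℝ) ≤ a - |t| := by linarith
    have h1 : |∫ s in Iic (t - a), ρ s| ≤ A * B2 * ((1 + (a - |t|)) ^ Q)⁻¹ := by
      refine le_trans (abs_setInt_le hmeas hA (Iic (t - a)))
        (tail_bound hmeas hA _ hd _ measurableSet_Iic ?_)
      intro s hs
      rw [mem_Iic] at hs
      have h2 : a - |t| ≤ -s := by linarith [le_abs_self t]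
      linarith [neg_le_abs s]
    have h2 : |∫ s in Ioi (t + a), ρ s| ≤ A * B2 * ((1 + (a - |t|)) ^ Q)⁻¹ := by
      refine le_trans (abs_setInt_le hmeas hA (Ioi (t + a)))
        (tail_bound hmeas hA _ hd _ measurableSet_Ioi ?_)
      intro s hs
      rw [mem_Ioi] at hs
      have h2 : a - |t| ≤ s := by linarith [neg_abs_le t]
      linarith [le_abs_self s]
    rw [abs_of_nonpos (by linarith : |t| - a ≤ 0)]
    calc |(∫ s in Iic (t - a), ρ s) + ∫ s in Ioi (t + a), ρ s|
        ≤ |∫ s in Iic (t - a), ρ s| + |∫ s in Ioi (t + a), ρ s| := abs_add_le _ _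
      _ ≤ 2 * (A * B2) * ((1 + -(|t| - a)) ^ Q)⁻¹ := by
          rw [show -(|t| - a) = a - |t| by ring]; linarith
  · rw [Ind_eq_zero h, zero_sub, abs_neg, abs_of_pos (by linarith : (0:ℝ) < |t| - a)]
    refine (F_tail hmeas hA ha t h).trans ?_
    have h0 : (0:ℝ) ≤ ((1 + (|t| - a)) ^ Q)⁻¹ :=
      inv_nonneg.2 (pow_nonneg (by linarith) _)
    linarith [mul_nonneg (mul_nonneg (A_nonneg hA) B2_nonneg) h0]


noncomputable def chi (P z : ℤ) : ℝ := if |z| ≤ P then 1 else 0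

omit hmeas hA ha in
lemma chi_nonneg (P z : ℤ) : 0 ≤ chi P z := by unfold chi; positivity

omit ha in
lemma Mc_nonneg : (0:ℝ) ≤ B0 ρ + A * B2 + 1 := by
  have := mul_nonneg (A_nonneg hA) B2_nonneg
  linarith [@B0_nonneg ρ]

omit ha in
lemma Mc_one_le : (1:ℝ) ≤ B0 ρ + A * B2 + 1 := by
  have := mul_nonneg (A_nonneg hA) B2_nonneg
  linarith [@B0_nonneg ρ]

omit hmeas hA ha in
lemma abs_cast_lb (s : ℤ) (t : ℝ) (h1 : (s:ℝ) ≤ t) (h2 : t ≤ (s:ℝ) + 1) :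
    |(s:ℝ)| - 1 ≤ |t| := by
  rcases le_or_gt 0 (s:ℝ) with h | h
  · rw [abs_of_nonneg h]; linarith [le_abs_self t]
  · rw [abs_of_neg h]; linarith [neg_le_abs t, neg_abs_le t]

omit hmeas hA ha in
lemma rpow_pow_aux {X : ℝ} (hX0 : 0 ≤ X) {mk : ℝ} (hmk : 0 ≤ mk)
    (hmkQ : mk + 2 ≤ (Q:ℝ)) :
    (1 + X) ^ mk * ((1 + X) ^ Q)⁻¹ ≤ ((1 + X) ^ 2)⁻¹ := by
  have hb : (0:ℝ) < 1 + X := by linarith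
  have e1 : (1 + X) ^ mk ≤ (1 + X) ^ ((Q:ℝ) - 2) :=
    Real.rpow_le_rpow_of_exponent_le (by linarith) (by linarith)
  have e2 : (1 + X) ^ ((Q:ℝ) - 2) * ((1 + X) ^ Q)⁻¹ = ((1 + X) ^ 2)⁻¹ := by
    rw [← Real.rpow_natCast (1 + X) Q, ← Real.rpow_natCast (1 + X) 2,
      ← Real.rpow_neg hb.le, ← Real.rpow_neg hb.le, ← Real.rpow_add hb]
    congr 1
    push_cast; ring
  calc (1 + X) ^ mk * ((1 + X) ^ Q)⁻¹ ≤ (1 + X) ^ ((Q:ℝ) - 2) * ((1 + X) ^ Q)⁻¹ :=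
        mul_le_mul_of_nonneg_right e1 (by positivity)
    _ = ((1 + X) ^ 2)⁻¹ := e2

lemma M_weighted (mk : ℝ) (hmk : 0 ≤ mk) (hmkQ : mk + 2 ≤ (Q:ℝ)) (s : ℤ) (t : ℝ)
    (h1 : (s:ℝ) ≤ t) (h2 : t ≤ (s:ℝ) + 1) :
    (B0 ρ + A * B2 + 1) * ((1 + max 0 (|t| - a)) ^ Q)⁻¹ * (1 + |(s:ℝ)|) ^ mk ≤
      (B0 ρ + A * B2 + 1) * (4 + a) ^ mk *
        (chi (⌊a⌋ + 2) s + Phi (s - (⌊a⌋ + 2)) + Phi (s + (⌊a⌋ + 2))) := by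
  have hMc := Mc_nonneg hmeas hA
  set X := max 0 (|(s:ℝ)| - 1 - a) with hXdef
  have hX0 : (0:ℝ) ≤ X := le_max_left _ _
  have habs := abs_cast_lb s t h1 h2
  have hstep1 : ((1 + max 0 (|t| - a)) ^ Q)⁻¹ ≤ ((1 + X) ^ Q)⁻¹ := by
    apply inv_anti₀ (by positivity)
    apply pow_le_pow_left₀ (by positivity)
    have : X ≤ max 0 (|t| - a) := max_le_max le_rfl (by linarith)
    linarith
  have hsX : |(s:ℝ)| ≤ 1 + a + X := by
    rcases le_or_gt (|(s:ℝ)| - 1 - a) 0 with h | h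
    · linarith
    · have : X = |(s:ℝ)| - 1 - a := max_eq_right h.le
      linarith
  have hs4 : 1 + |(s:ℝ)| ≤ (4 + a) * (1 + X) := by nlinarith
  have hstep2 : (1 + |(s:ℝ)|) ^ mk ≤ (4 + a) ^ mk * (1 + X) ^ mk := by
    rw [← Real.mul_rpow (by positivity) (by positivity)]
    exact Real.rpow_le_rpow (by positivity) hs4 hmk
  have hstep4 : ((1 + X) ^ 2)⁻¹ ≤
      chi (⌊a⌋ + 2) s + Phi (s - (⌊a⌋ + 2)) + Phi (s + (⌊a⌋ + 2)) := by
    have hPa : a + 1 ≤ ((⌊a⌋ + 2 : ℤ):ℝ) := by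
      push_cast
      linarith [Int.lt_floor_add_one a]
    have hPa' : ((⌊a⌋ + 2 : ℤ):ℝ) ≤ a + 2 := by
      push_cast
      linarith [Int.floor_le a]
    set P : ℤ := ⌊a⌋ + 2 with hPdef
    rcases le_or_gt |s| P with h | h
    · have hle1 : ((1 + X) ^ 2)⁻¹ ≤ 1 := by
        rw [inv_le_one_iff₀]
        right
        nlinarith
      have e1 : chi P s = 1 := by unfold chi; rw [if_pos h]
      linarith [Phi_nonneg (s - P), Phi_nonneg (s + P)]
    · have hchi : (0:ℝ) ≤ chi P s := chi_nonneg P s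
      rcases le_or_gt 0 s with hs | hs
      · -- s ≥ P + 1
        have habs' : |s| = s := abs_of_nonneg hs
        have hsP : P + 1 ≤ s := by omega
        have hsP' : (1:ℤ) ≤ s - P := by omega
        have hkey : 1 + |((s - P : ℤ) : ℝ)| ≤ 1 + X := by
          have e2 : |((s - P : ℤ) : ℝ)| = (s:ℝ) - P := by
            rw [abs_of_nonneg (by exact_mod_cast (by omega : (0:ℤ) ≤ s - P))]
            push_cast; ring
          have e3 : |(s:ℝ)| = (s:ℝ) := abs_of_nonneg (by exact_mod_cast hs)
          have e4 : (s:ℝ) - 1 - a ≥ (s:ℝ) - P := by linarith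
          have : X ≥ (s:ℝ) - 1 - a := by rw [hXdef]; apply le_max_right _ _ |>.trans' (by rw [e3])
          rw [e2]
          linarith
        have : Phi (s - P) ≥ ((1 + X) ^ 2)⁻¹ := by
          unfold Phi
          apply inv_anti₀ (by positivity)
          apply pow_le_pow_left₀ (by positivity) hkey
        linarith [Phi_nonneg (s + P)]
      · -- s ≤ -(P+1)
        have hsP : s + P ≤ -1 := by
          rcases abs_cases s with ⟨he, _⟩ | ⟨he, _⟩ <;> omega
        have hkey : 1 + |((s + P : ℤ) : ℝ)| ≤ 1 + X := by
          have e2 : |((s + P : ℤ) : ℝ)| = -((s:ℝ) + P) := by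
            rw [abs_of_neg (by exact_mod_cast (by omega : s + P < 0))]
            push_cast; ring
          have e3 : |(s:ℝ)| = -(s:ℝ) := abs_of_neg (by exact_mod_cast hs)
          have : X ≥ -(s:ℝ) - 1 - a := by
            rw [hXdef, ← e3]; exact le_max_right _ _
          rw [e2]
          linarith
        have : Phi (s + P) ≥ ((1 + X) ^ 2)⁻¹ := by
          unfold Phi
          apply inv_anti₀ (by positivity)
          apply pow_le_pow_left₀ (by positivity) hkey
        linarith [Phi_nonneg (s - P)]
  calc (B0 ρ + A * B2 + 1) * ((1 + max 0 (|t| - a)) ^ Q)⁻¹ * (1 + |(s:ℝ)|) ^ mk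
      ≤ (B0 ρ + A * B2 + 1) * ((1 + X) ^ Q)⁻¹ * ((4 + a) ^ mk * (1 + X) ^ mk) := by
        apply mul_le_mul (mul_le_mul_of_nonneg_left hstep1 hMc) hstep2 (by positivity)
        positivity
    _ = (B0 ρ + A * B2 + 1) * (4 + a) ^ mk * ((1 + X) ^ mk * ((1 + X) ^ Q)⁻¹) := by ring
    _ ≤ (B0 ρ + A * B2 + 1) * (4 + a) ^ mk * ((1 + X) ^ 2)⁻¹ := by
        apply mul_le_mul_of_nonneg_left (rpow_pow_aux hX0 hmk hmkQ)
        positivity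
    _ ≤ (B0 ρ + A * B2 + 1) * (4 + a) ^ mk *
        (chi (⌊a⌋ + 2) s + Phi (s - (⌊a⌋ + 2)) + Phi (s + (⌊a⌋ + 2))) := by
        apply mul_le_mul_of_nonneg_left hstep4
        positivity

lemma D_weighted (mk : ℝ) (hmk : 0 ≤ mk) (hmkQ : mk + 2 ≤ (Q:ℝ)) (s : ℤ) (t : ℝ)
    (h1 : (s:ℝ) ≤ t) (h2 : t ≤ (s:ℝ) + 1) :
    2 * (A * B2) * ((1 + |(|t| - a)|) ^ Q)⁻¹ * (1 + |(s:ℝ)|) ^ mk ≤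
      18 * (A * B2) * (4 + a) ^ mk * (Phi (s - ⌊a⌋) + Phi (s + ⌊a⌋)) := by
  have hAB : (0:ℝ) ≤ A * B2 := mul_nonneg (A_nonneg hA) B2_nonneg
  have hap : |a - (⌊a⌋:ℝ)| ≤ 1 := by
    rw [abs_of_nonneg (by linarith [Int.floor_le a])]
    linarith [Int.lt_floor_add_one a]
  set p : ℤ := ⌊a⌋ with hpdef
  set dd : ℝ := min |(s:ℝ) - (p:ℝ)| |(s:ℝ) + (p:ℝ)| with hdd
  set DT : ℝ := max 0 (dd - 2) with hDT
  have hDT0 : (0:ℝ) ≤ DT := le_max_left _ _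
  have hdd0 : (0:ℝ) ≤ dd := le_min (abs_nonneg _) (abs_nonneg _)
  have hts : |t - (s:ℝ)| ≤ 1 := by rw [abs_of_nonneg (by linarith)]; linarith
  have key1 : dd - 2 ≤ |(|t| - a)| := by
    rcases le_or_gt 0 t with ht | ht
    · have e1 : |(|t| - a)| = |t - a| := by rw [abs_of_nonneg ht]
      have e2 : |(s:ℝ) - (p:ℝ)| ≤ |(s:ℝ) - t| + |t - a| + |a - (p:ℝ)| := by
        calc |(s:ℝ) - (p:ℝ)| = |((s:ℝ) - t) + (t - a) + (a - (p:ℝ))| := by ring_nf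
          _ ≤ _ := by
            refine (abs_add_le _ _).trans ?_
            gcongr
            exact abs_add_le _ _
      have e3 : |(s:ℝ) - t| = |t - (s:ℝ)| := abs_sub_comm _ _
      rw [e1]
      have := min_le_left |(s:ℝ) - (p:ℝ)| |(s:ℝ) + (p:ℝ)|
      linarith
    · have e1 : |(|t| - a)| = |t + a| := by
        rw [abs_of_neg ht, show -t - a = -(t + a) by ring, abs_neg]
      have e2 : |(s:ℝ) + (p:ℝ)| ≤ |(s:ℝ) - t| + |t + a| + |a - (p:ℝ)| := by
        calc |(s:ℝ) + (p:ℝ)| = |((s:ℝ) - t) + (t + a) + -(a - (p:ℝ))| := by ring_nf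
          _ ≤ _ := by
            refine (abs_add_le _ _).trans ?_
            rw [abs_neg]
            gcongr
            exact abs_add_le _ _
      have e3 : |(s:ℝ) - t| = |t - (s:ℝ)| := abs_sub_comm _ _
      rw [e1]
      have := min_le_right |(s:ℝ) - (p:ℝ)| |(s:ℝ) + (p:ℝ)|
      linarith
  have hDle : DT ≤ |(|t| - a)| := max_le (abs_nonneg _) key1
  have hstep1 : ((1 + |(|t| - a)|) ^ Q)⁻¹ ≤ ((1 + DT) ^ Q)⁻¹ := by
    apply inv_anti₀ (by positivity)
    apply pow_le_pow_left₀ (by positivity) (by linarith)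
  have habsa : |(|(s:ℝ)| - a)| ≤ dd + 1 := by
    have e1 : |(|(s:ℝ)| - a)| = |(|(s:ℝ)| - |a|)| := by rw [abs_of_nonneg ha]
    have e2 : |(|(s:ℝ)| - |a|)| ≤ |(s:ℝ) - a| := abs_abs_sub_abs_le_abs_sub _ _
    have e2' : |(|(s:ℝ)| - |a|)| ≤ |(s:ℝ) + a| := by
      have e3 : |(|(s:ℝ)| - |a|)| = |(|(-(s:ℝ))| - |a|)| := by rw [abs_neg]
      calc |(|(s:ℝ)| - |a|)| = |(|(-(s:ℝ))| - |a|)| := e3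
        _ ≤ |(-(s:ℝ)) - a| := abs_abs_sub_abs_le_abs_sub _ _
        _ = |(s:ℝ) + a| := by rw [show -(s:ℝ) - a = -((s:ℝ) + a) by ring, abs_neg]
    have e4 : |(s:ℝ) - a| ≤ |(s:ℝ) - (p:ℝ)| + 1 := by
      calc |(s:ℝ) - a| = |((s:ℝ) - (p:ℝ)) + -(a - (p:ℝ))| := by ring_nf
        _ ≤ |(s:ℝ) - (p:ℝ)| + |a - (p:ℝ)| := by
            refine (abs_add_le _ _).trans ?_
            rw [abs_neg]
        _ ≤ _ := by linarith
    have e5 : |(s:ℝ) + a| ≤ |(s:ℝ) + (p:ℝ)| + 1 := by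
      calc |(s:ℝ) + a| = |((s:ℝ) + (p:ℝ)) + (a - (p:ℝ))| := by ring_nf
        _ ≤ |(s:ℝ) + (p:ℝ)| + |a - (p:ℝ)| := abs_add_le _ _
        _ ≤ _ := by linarith
    rcases min_cases |(s:ℝ) - (p:ℝ)| |(s:ℝ) + (p:ℝ)| with ⟨hmin, _⟩ | ⟨hmin, _⟩ <;>
      rw [hdd, hmin] <;> linarith
  have hsb : 1 + |(s:ℝ)| ≤ (4 + a) * (1 + DT) := by
    have e1 : |(s:ℝ)| ≤ a + |(|(s:ℝ)| - a)| := by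
      rcases abs_cases (|(s:ℝ)| - a) with ⟨he, _⟩ | ⟨he, _⟩ <;> linarith
    have e2 : dd ≤ DT + 2 := by
      rcases max_cases (0:ℝ) (dd - 2) with ⟨he, hc⟩ | ⟨he, hc⟩ <;> linarith
    nlinarith
  have hstep2 : (1 + |(s:ℝ)|) ^ mk ≤ (4 + a) ^ mk * (1 + DT) ^ mk := by
    rw [← Real.mul_rpow (by positivity) (by positivity)]
    exact Real.rpow_le_rpow (by positivity) hsb hmk
  have hstep4 : ((1 + DT) ^ 2)⁻¹ ≤ 9 * (Phi (s - p) + Phi (s + p)) := by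
    have h3 : (1 + dd) / 3 ≤ 1 + DT := by
      rcases max_cases (0:ℝ) (dd - 2) with ⟨he, hc⟩ | ⟨he, hc⟩ <;> linarith
    have h4 : ((1 + DT) ^ 2)⁻¹ ≤ 9 * ((1 + dd) ^ 2)⁻¹ := by
      rw [show (9:ℝ) * ((1 + dd) ^ 2)⁻¹ = (((1 + dd) / 3) ^ 2)⁻¹ by
        rw [div_pow]; rw [inv_div]; ring_nf]
      apply inv_anti₀ (by positivity)
      apply pow_le_pow_left₀ (by positivity) h3
    have h5 : ((1 + dd) ^ 2)⁻¹ ≤ Phi (s - p) + Phi (s + p) := by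
      rcases min_cases |(s:ℝ) - (p:ℝ)| |(s:ℝ) + (p:ℝ)| with ⟨hmin, _⟩ | ⟨hmin, _⟩
      · have e6 : Phi (s - p) = ((1 + dd) ^ 2)⁻¹ := by
          unfold Phi
          rw [hdd, hmin]
          congr 3
          push_cast
          ring
        rw [e6]
        linarith [Phi_nonneg (s + p)]
      · have e6 : Phi (s + p) = ((1 + dd) ^ 2)⁻¹ := by
          unfold Phi
          rw [hdd, hmin]
          congr 3
          push_cast
          ring
        rw [e6]
        linarith [Phi_nonneg (s - p)]
    linarith
  calc 2 * (A * B2) * ((1 + |(|t| - a)|) ^ Q)⁻¹ * (1 + |(s:ℝ)|) ^ mk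
      ≤ 2 * (A * B2) * ((1 + DT) ^ Q)⁻¹ * ((4 + a) ^ mk * (1 + DT) ^ mk) := by
        apply mul_le_mul (mul_le_mul_of_nonneg_left hstep1 (by linarith)) hstep2
          (by positivity) (by positivity)
    _ = 2 * (A * B2) * (4 + a) ^ mk * ((1 + DT) ^ mk * ((1 + DT) ^ Q)⁻¹) := by ring
    _ ≤ 2 * (A * B2) * (4 + a) ^ mk * ((1 + DT) ^ 2)⁻¹ := by
        apply mul_le_mul_of_nonneg_left (rpow_pow_aux hDT0 hmk hmkQ)
        positivity
    _ ≤ 2 * (A * B2) * (4 + a) ^ mk * (9 * (Phi (s - p) + Phi (s + p))) := by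
        apply mul_le_mul_of_nonneg_left hstep4
        positivity
    _ = 18 * (A * B2) * (4 + a) ^ mk * (Phi (s - p) + Phi (s + p)) := by ring

noncomputable def gB (ρ : ℝ → ℝ) (A a mk : ℝ) (z : ℤ) : ℝ :=
  18 * (A * B2) * (4 + a) ^ mk * (Phi (z - ⌊a⌋) + Phi (z + ⌊a⌋))

noncomputable def wB (ρ : ℝ → ℝ) (A a mk : ℝ) (z : ℤ) : ℝ :=
  (B0 ρ + A * B2 + 1) * (4 + a) ^ mk *
    (chi (⌊a⌋ + 2) z + Phi (z - (⌊a⌋ + 2)) + Phi (z + (⌊a⌋ + 2)))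

omit ha in
lemma wB_nonneg (a mk : ℝ) (haa : 0 ≤ a) (z : ℤ) : 0 ≤ wB ρ A a mk z := by
  unfold wB
  have h1 := Mc_nonneg hmeas hA
  have h2 : (0:ℝ) ≤ (4 + a) ^ mk := Real.rpow_nonneg (by linarith) _
  have := chi_nonneg (⌊a⌋ + 2) z
  have := Phi_nonneg (z - (⌊a⌋ + 2))
  have := Phi_nonneg (z + (⌊a⌋ + 2))
  positivity

omit hmeas hA ha in
lemma Ind_abs_le_one (b t : ℝ) :
    |Set.indicator (Icc (-b) b) (fun _ => (1:ℝ)) t| ≤ 1 := by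
  rcases Set.indicator_eq_zero_or_self (Icc (-b) b) (fun _ => (1:ℝ)) t with h | h <;>
    rw [h] <;> norm_num

omit ha in
lemma box_bound {n : ℕ} (hint : (∫ x : ℝ, ρ x) = 1) (a : Fin n → ℝ)
    (haf : ∀ k, 0 ≤ a k) (m : Fin n → ℝ)
    (hm : ∀ k, 0 ≤ m k) (hmQ : ∀ k, m k + 2 ≤ (Q:ℝ)) (s : Fin n → ℤ) (t : Fin n → ℝ)
    (ht : ∀ k, (s k : ℝ) ≤ t k ∧ t k ≤ (s k : ℝ) + 1) :
    |(∏ k, Set.indicator (Icc (-(a k)) (a k)) (fun _ => (1:ℝ)) (t k)) -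
        ∏ k, ∫ x in (t k - a k)..(t k + a k), ρ x| * ∏ k, (1 + |(s k : ℝ)|) ^ (m k) ≤
      ∑ k, gB ρ A (a k) (m k) (s k) *
        ∏ l ∈ Finset.univ.erase k, wB ρ A (a l) (m l) (s l) := by
  classical
  set Mf : Fin n → ℝ :=
    fun k => (B0 ρ + A * B2 + 1) * ((1 + max 0 (|t k| - a k)) ^ Q)⁻¹ with hMf
  set Df : Fin n → ℝ := fun k => 2 * (A * B2) * ((1 + |(|t k| - a k)|) ^ Q)⁻¹ with hDf
  have hMc1 := Mc_one_le hmeas hA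
  have hx : ∀ k ∈ Finset.univ (α := Fin n),
      |Set.indicator (Icc (-(a k)) (a k)) (fun _ => (1:ℝ)) (t k)| ≤ Mf k := by
    intro k _
    rcases le_or_gt (|t k|) (a k) with h | h
    · rw [Ind_eq_one hmeas hA (haf k) h]
      have e1 : max 0 (|t k| - a k) = 0 := max_eq_left (by linarith)
      simp only [hMf, e1]
      norm_num
      linarith
    · rw [Ind_eq_zero h]
      simp only [hMf, abs_zero]
      positivity
  have hy : ∀ k ∈ Finset.univ (α := Fin n),
      |∫ x in (t k - a k)..(t k + a k), ρ x| ≤ Mf k :=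
    fun k _ => F_bound hmeas hA (haf k) (t k)
  have hD : ∀ k ∈ Finset.univ (α := Fin n),
      |Set.indicator (Icc (-(a k)) (a k)) (fun _ => (1:ℝ)) (t k) -
        ∫ x in (t k - a k)..(t k + a k), ρ x| ≤ Df k :=
    fun k _ => diff_bound hmeas hA (haf k) hint (t k)
  have htel := abs_prod_sub_prod Finset.univ _ _ Mf Df hx hy hD
  have hWnn : (0:ℝ) ≤ ∏ k, (1 + |(s k : ℝ)|) ^ (m k) :=
    Finset.prod_nonneg fun k _ => Real.rpow_nonneg (by positivity) _
  refine le_trans (mul_le_mul_of_nonneg_right htel hWnn) ?_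
  rw [Finset.sum_mul]
  apply Finset.sum_le_sum
  intro k _
  have hW : (∏ l, (1 + |(s l : ℝ)|) ^ (m l)) =
      (1 + |(s k : ℝ)|) ^ (m k) * ∏ l ∈ Finset.univ.erase k, (1 + |(s l : ℝ)|) ^ (m l) :=
    (Finset.mul_prod_erase Finset.univ _ (Finset.mem_univ k)).symm
  rw [hW]
  have hre : Df k * (∏ l ∈ Finset.univ.erase k, Mf l) *
      ((1 + |(s k : ℝ)|) ^ (m k) * ∏ l ∈ Finset.univ.erase k, (1 + |(s l : ℝ)|) ^ (m l)) =
      (Df k * (1 + |(s k : ℝ)|) ^ (m k)) *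
        ∏ l ∈ Finset.univ.erase k, (Mf l * (1 + |(s l : ℝ)|) ^ (m l)) := by
    rw [mul_mul_mul_comm, ← Finset.prod_mul_distrib]
  rw [hre]
  have hgb : Df k * (1 + |(s k : ℝ)|) ^ (m k) ≤ gB ρ A (a k) (m k) (s k) := by
    unfold gB
    exact D_weighted hmeas hA (haf k) (m k) (hm k) (hmQ k) (s k) (t k) (ht k).1 (ht k).2
  have hwb : (∏ l ∈ Finset.univ.erase k, (Mf l * (1 + |(s l : ℝ)|) ^ (m l))) ≤
      ∏ l ∈ Finset.univ.erase k, wB ρ A (a l) (m l) (s l) := by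
    apply Finset.prod_le_prod
    · intro l _
      have : (0:ℝ) ≤ Mf l := by
        rw [hMf]
        have := Mc_nonneg hmeas hA
        positivity
      positivity
    · intro l _
      unfold wB
      exact M_weighted hmeas hA (haf l) (m l) (hm l) (hmQ l) (s l) (t l) (ht l).1 (ht l).2
  have hDfnn : (0:ℝ) ≤ Df k * (1 + |(s k : ℝ)|) ^ (m k) := by
    rw [hDf]
    have := mul_nonneg (A_nonneg hA) B2_nonneg
    positivity
  have hgbnn : (0:ℝ) ≤ ∏ l ∈ Finset.univ.erase k, (Mf l * (1 + |(s l : ℝ)|) ^ (m l)) := by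
    apply Finset.prod_nonneg
    intro l _
    have : (0:ℝ) ≤ Mf l := by
      rw [hMf]
      have := Mc_nonneg hmeas hA
      positivity
    positivity
  exact mul_le_mul hgb hwb hgbnn (le_trans hDfnn hgb)

omit ha in
lemma tsum_gB (a mk : ℝ) (haa : 0 ≤ a) :
    (∑' z : ℤ, ENNReal.ofReal (gB ρ A a mk z)) =
      ENNReal.ofReal (18 * (A * B2) * (4 + a) ^ mk * (Zr + Zr)) := by
  have hc : (0:ℝ) ≤ 18 * (A * B2) * (4 + a) ^ mk := by
    have := mul_nonneg (A_nonneg hA) B2_nonneg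
    have : (0:ℝ) ≤ (4 + a) ^ mk := Real.rpow_nonneg (by linarith) _
    positivity
  calc (∑' z : ℤ, ENNReal.ofReal (gB ρ A a mk z))
      = ∑' z : ℤ, ENNReal.ofReal (18 * (A * B2) * (4 + a) ^ mk) *
          (ENNReal.ofReal (Phi (z - ⌊a⌋)) + ENNReal.ofReal (Phi (z + ⌊a⌋))) := by
        apply tsum_congr
        intro z
        unfold gB
        rw [ENNReal.ofReal_mul hc, ENNReal.ofReal_add (Phi_nonneg _) (Phi_nonneg _)]
    _ = ENNReal.ofReal (18 * (A * B2) * (4 + a) ^ mk) *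
          ((∑' z : ℤ, ENNReal.ofReal (Phi (z - ⌊a⌋))) +
            ∑' z : ℤ, ENNReal.ofReal (Phi (z + ⌊a⌋))) := by
        rw [ENNReal.tsum_mul_left, ENNReal.tsum_add]
    _ = ENNReal.ofReal (18 * (A * B2) * (4 + a) ^ mk * (Zr + Zr)) := by
        rw [tsum_ofReal_Phi_sub, tsum_ofReal_Phi_add,
          ← ENNReal.ofReal_add Zr_nonneg Zr_nonneg, ← ENNReal.ofReal_mul hc]

omit ha in
lemma tsum_wB (a mk : ℝ) (haa : 0 ≤ a) :
    (∑' z : ℤ, ENNReal.ofReal (wB ρ A a mk z)) ≤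
      ENNReal.ofReal ((B0 ρ + A * B2 + 1) * (4 + a) ^ mk * ((2 * a + 5) + (Zr + Zr))) := by
  have hc : (0:ℝ) ≤ (B0 ρ + A * B2 + 1) * (4 + a) ^ mk := by
    have h1 := Mc_nonneg hmeas hA
    have h2 : (0:ℝ) ≤ (4 + a) ^ mk := Real.rpow_nonneg (by linarith) _
    positivity
  have hP0 : (0:ℤ) ≤ ⌊a⌋ + 2 := by
    have : (0:ℤ) ≤ ⌊a⌋ := Int.floor_nonneg.2 haa
    omega
  have hcast : ((⌊a⌋ + 2 : ℤ):ℝ) ≤ a + 2 := by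
    push_cast
    linarith [Int.floor_le a]
  calc (∑' z : ℤ, ENNReal.ofReal (wB ρ A a mk z))
      = ∑' z : ℤ, ENNReal.ofReal ((B0 ρ + A * B2 + 1) * (4 + a) ^ mk) *
          (ENNReal.ofReal (chi (⌊a⌋ + 2) z) + ENNReal.ofReal (Phi (z - (⌊a⌋ + 2))) +
            ENNReal.ofReal (Phi (z + (⌊a⌋ + 2)))) := by
        apply tsum_congr
        intro z
        unfold wB
        rw [ENNReal.ofReal_mul hc,
          ENNReal.ofReal_add (add_nonneg (chi_nonneg _ _) (Phi_nonneg _)) (Phi_nonneg _),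
          ENNReal.ofReal_add (chi_nonneg _ _) (Phi_nonneg _)]
    _ = ENNReal.ofReal ((B0 ρ + A * B2 + 1) * (4 + a) ^ mk) *
          ((∑' z : ℤ, ENNReal.ofReal (chi (⌊a⌋ + 2) z)) +
            (∑' z : ℤ, ENNReal.ofReal (Phi (z - (⌊a⌋ + 2)))) +
            ∑' z : ℤ, ENNReal.ofReal (Phi (z + (⌊a⌋ + 2)))) := by
        rw [ENNReal.tsum_mul_left, ENNReal.tsum_add, ENNReal.tsum_add]
    _ ≤ ENNReal.ofReal ((B0 ρ + A * B2 + 1) * (4 + a) ^ mk) *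
          (ENNReal.ofReal (2 * a + 5) + ENNReal.ofReal Zr + ENNReal.ofReal Zr) := by
        apply mul_le_mul_right _ _
        rw [tsum_ofReal_Phi_sub, tsum_ofReal_Phi_add]
        apply add_le_add (add_le_add _ le_rfl) le_rfl
        have h5 : (∑' z : ℤ, ENNReal.ofReal (chi (⌊a⌋ + 2) z)) ≤
            ENNReal.ofReal (2 * ((⌊a⌋ + 2 : ℤ):ℝ) + 1) := by
          have := tsum_ofReal_chi (⌊a⌋ + 2) hP0
          refine le_trans (le_of_eq ?_) this
          apply tsum_congr
          intro z
          unfold chi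
          rfl
        refine h5.trans (ENNReal.ofReal_le_ofReal (by linarith))
    _ ≤ ENNReal.ofReal ((B0 ρ + A * B2 + 1) * (4 + a) ^ mk * ((2 * a + 5) + (Zr + Zr))) := by
        rw [← ENNReal.ofReal_add (by linarith) Zr_nonneg,
          ← ENNReal.ofReal_add (by linarith [Zr_nonneg]) Zr_nonneg,
          ← ENNReal.ofReal_mul hc]
        apply ENNReal.ofReal_le_ofReal
        apply le_of_eq
        ring

end rho

lemma gB_nonneg' {ρ : ℝ → ℝ} {A : ℝ} (hA0 : 0 ≤ A) (a mk : ℝ) (haa : 0 ≤ a) (z : ℤ) :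
    0 ≤ gB ρ A a mk z := by
  unfold gB
  have h2 : (0:ℝ) ≤ (4 + a) ^ mk := Real.rpow_nonneg (by linarith) _
  have := Phi_nonneg (z - ⌊a⌋)
  have := Phi_nonneg (z + ⌊a⌋)
  have := B2_nonneg
  positivity

lemma rpow_sum_eq (x : ℝ) (hx : 0 < x) {ι : Type*} (s : Finset ι) (f : ι → ℝ) :
    x ^ (∑ i ∈ s, f i) = ∏ i ∈ s, x ^ f i := by
  induction s using Finset.cons_induction with
  | empty => simp
  | cons a t ha ih => rw [Finset.sum_cons, Finset.prod_cons, Real.rpow_add hx, ih]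

end TaubAux


open TaubAux


open scoped ENNReal in
/-- Sequence-level formulation of the paper's Tauberian Proposition 7.1: the difference
between the sharp joint spectral sum over the box `I(λ,c̄)` and its smoothing by `ρ` in
each variable is of one lower order in `λ`. -/
theorem tauberian_estimate (n : ℕ) (hn : 1 ≤ n)
    (lamb : ℕ → Fin n → ℝ) (u v : ℕ → ℂ)
    (m : Fin n → ℝ) (hm : ∀ k, 0 ≤ m k) (C : ℝ) (hC : 0 < C)
    (hu : ∀ s : Fin n → ℤ,
      (∑' j, Set.indicator
          {j : ℕ | ∀ k, lamb j k ∈ Set.Icc ((s k : ℝ)) ((s k : ℝ) + 1)}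
          (fun j => ENNReal.ofReal (‖u j‖ ^ 2)) j) ≤
        ENNReal.ofReal (C * ∏ k, (1 + |(s k : ℝ)|) ^ (m k)))
    (hv : ∀ s : Fin n → ℤ,
      (∑' j, Set.indicator
          {j : ℕ | ∀ k, lamb j k ∈ Set.Icc ((s k : ℝ)) ((s k : ℝ) + 1)}
          (fun j => ENNReal.ofReal (‖v j‖ ^ 2)) j) ≤
        ENNReal.ofReal (C * ∏ k, (1 + |(s k : ℝ)|) ^ (m k)))
    (ρ : ℝ → ℝ) (hmeas : Measurable ρ)
    (hdecay : ∀ N : ℕ, ∃ A : ℝ, ∀ s : ℝ, |ρ s| ≤ A * ((1 + |s|) ^ N)⁻¹)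
    (hint : (∫ s : ℝ, ρ s) = 1)
    (c : Fin n → ℝ) (hc : ∀ l, c l ≠ 0) :
    ∃ C' > (0 : ℝ), ∀ lam : ℝ, 1 ≤ lam →
      (∑' j, ENNReal.ofReal
          (|(∏ k, Set.indicator (Set.Icc (-(lam * |c k|)) (lam * |c k|))
                (fun _ => (1 : ℝ)) (lamb j k)) -
            ∏ k, ∫ s in (lamb j k - lam * |c k|)..(lamb j k + lam * |c k|), ρ s| *
          ‖u j‖ * ‖v j‖)) ≤
        ENNReal.ofReal (C' * lam ^ ((∑ i, m i) + n - 1)) := by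
  classical
  set M : ℝ := ∑ i, m i with hMdef
  have hM0 : 0 ≤ M := Finset.sum_nonneg fun i _ => hm i
  set Q : ℕ := ⌈M⌉₊ + 2 with hQdef
  have hQk : ∀ k, m k + 2 ≤ (Q : ℝ) := by
    intro k
    have h1 : m k ≤ M := Finset.single_le_sum (fun i _ => hm i) (Finset.mem_univ k)
    have h2 : M ≤ (⌈M⌉₊ : ℝ) := Nat.le_ceil M
    rw [hQdef]
    push_cast
    linarith
  obtain ⟨A, hA⟩ := hdecay (Q + 2)
  have hA0 : 0 ≤ A := A_nonneg hA
  set β : Fin n → ℝ := fun l =>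
    (B0 ρ + A * B2 + 1) * (4 + |c l|) ^ (m l) * ((2 * |c l| + 5) + (Zr + Zr)) with hβdef
  set γ : Fin n → ℝ := fun k => 18 * (A * B2) * (4 + |c k|) ^ (m k) * (Zr + Zr) with hγdef
  have hβ0 : ∀ l, 0 ≤ β l := by
    intro l
    have h1 := Mc_nonneg hmeas hA
    have h2 : (0:ℝ) ≤ (4 + |c l|) ^ (m l) := Real.rpow_nonneg (by positivity) _
    have := Zr_nonneg
    rw [hβdef]
    positivity
  have hγ0 : ∀ k, 0 ≤ γ k := by
    intro k
    have h2 : (0:ℝ) ≤ (4 + |c k|) ^ (m k) := Real.rpow_nonneg (by positivity) _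
    have := Zr_nonneg
    have := mul_nonneg hA0 B2_nonneg
    rw [hγdef]
    positivity
  set C0 : ℝ := 2 * C * ∑ k, γ k * ∏ l ∈ Finset.univ.erase k, β l with hC0def
  refine ⟨|C0| + 1, by positivity, ?_⟩
  intro lam hlam
  have hlam0 : (0:ℝ) < lam := by linarith
  set a : Fin n → ℝ := fun k => lam * |c k| with hadef
  have ha0 : ∀ k, 0 ≤ a k := fun k => by rw [hadef]; positivity
  set φ : ℕ → (Fin n → ℤ) := fun j k => ⌊lamb j k⌋ with hφdef
  set term : ℕ → ℝ≥0∞ := fun j => ENNReal.ofReal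
      (|(∏ k, Set.indicator (Set.Icc (-(lam * |c k|)) (lam * |c k|))
            (fun _ => (1 : ℝ)) (lamb j k)) -
        ∏ k, ∫ s in (lamb j k - lam * |c k|)..(lamb j k + lam * |c k|), ρ s| *
      ‖u j‖ * ‖v j‖) with htermdef
  set W : (Fin n → ℤ) → ℝ := fun s => ∏ k, (1 + |(s k : ℝ)|) ^ (m k) with hWdef
  have hW0 : ∀ s, 0 < W s := by
    intro s
    rw [hWdef]
    exact Finset.prod_pos fun k _ => Real.rpow_pos_of_pos (by positivity) _
  set RB : (Fin n → ℤ) → ℝ := fun s => ∑ k, gB ρ A (a k) (m k) (s k) *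
      ∏ l ∈ Finset.univ.erase k, wB ρ A (a l) (m l) (s l) with hRBdef
  have hRB0 : ∀ s, 0 ≤ RB s := by
    intro s
    rw [hRBdef]
    apply Finset.sum_nonneg
    intro k _
    exact mul_nonneg (gB_nonneg' hA0 _ _ (ha0 k) _)
      (Finset.prod_nonneg fun l _ => wB_nonneg hmeas hA _ _ (ha0 l) _)
  -- fiber bound
  have hfiber : ∀ s : Fin n → ℤ,
      (∑' jf : {j // φ j = s}, term jf.1) ≤ ENNReal.ofReal (2 * C * RB s) := by
    intro s
    have hbox : ∀ j, φ j = s → ∀ k, (s k : ℝ) ≤ lamb j k ∧ lamb j k ≤ (s k : ℝ) + 1 := by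
      intro j hj k
      have : ⌊lamb j k⌋ = s k := congrFun hj k
      constructor
      · rw [← this]; exact Int.floor_le _
      · rw [← this]; exact (Int.lt_floor_add_one _).le
    have hhj : ∀ j, φ j = s →
        |(∏ k, Set.indicator (Set.Icc (-(lam * |c k|)) (lam * |c k|))
            (fun _ => (1 : ℝ)) (lamb j k)) -
          ∏ k, ∫ x in (lamb j k - lam * |c k|)..(lamb j k + lam * |c k|), ρ x| ≤
        RB s / W s := by
      intro j hj
      rw [le_div_iff₀ (hW0 s)]
      have := box_bound hmeas hA hint a ha0 m hm hQk s (fun k => lamb j k)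
        (hbox j hj)
      rw [hRBdef, hWdef]
      simpa [hadef] using this
    have hterm_le : ∀ jf : {j // φ j = s}, term jf.1 ≤
        ENNReal.ofReal (RB s / W s) *
          (ENNReal.ofReal (‖u jf.1‖ ^ 2) +
            ENNReal.ofReal (‖v jf.1‖ ^ 2)) := by
      intro ⟨j, hj⟩
      have h1 := hhj j hj
      have habuv : ‖u j‖ * ‖v j‖ ≤
          ‖u j‖ ^ 2 + ‖v j‖ ^ 2 := by
        nlinarith [sq_nonneg (‖u j‖ - ‖v j‖),
          norm_nonneg (u j), norm_nonneg (v j)]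
      have h2 : |(∏ k, Set.indicator (Set.Icc (-(lam * |c k|)) (lam * |c k|))
            (fun _ => (1 : ℝ)) (lamb j k)) -
          ∏ k, ∫ x in (lamb j k - lam * |c k|)..(lamb j k + lam * |c k|), ρ x| *
          ‖u j‖ * ‖v j‖ ≤
          (RB s / W s) * (‖u j‖ ^ 2 + ‖v j‖ ^ 2) := by
        rw [mul_assoc]
        apply mul_le_mul h1 habuv (by positivity) (div_nonneg (hRB0 s) (hW0 s).le)
      rw [htermdef]
      refine le_trans (ENNReal.ofReal_le_ofReal h2) ?_
      rw [ENNReal.ofReal_mul (div_nonneg (hRB0 s) (hW0 s).le),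
        ENNReal.ofReal_add (sq_nonneg _) (sq_nonneg _)]
    have hsub : {j : ℕ | φ j = s} ⊆
        {j : ℕ | ∀ k, lamb j k ∈ Set.Icc ((s k : ℝ)) ((s k : ℝ) + 1)} := by
      intro j hj
      intro k
      have hfl : ⌊lamb j k⌋ = s k := congrFun hj k
      refine Set.mem_Icc.2 ⟨?_, ?_⟩
      · rw [← hfl]; exact Int.floor_le _
      · rw [← hfl]; exact (Int.lt_floor_add_one _).le
    have hsubU : (∑' jf : {j // φ j = s}, ENNReal.ofReal (‖u jf.1‖ ^ 2)) ≤
        ENNReal.ofReal (C * W s) := by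
      have hre : (∑' jf : {j // φ j = s}, ENNReal.ofReal (‖u jf.1‖ ^ 2)) =
          ∑' jf : ({j | φ j = s} : Set ℕ), ENNReal.ofReal (‖u jf.1‖ ^ 2) := rfl
      rw [hre, tsum_subtype {j | φ j = s} (fun j => ENNReal.ofReal (‖u j‖ ^ 2))]
      refine le_trans (Summable.tsum_le_tsum (fun j => Set.indicator_le_indicator_of_subset
        hsub (fun _ => zero_le) j) ENNReal.summable ENNReal.summable) (hu s)
    have hsubV : (∑' jf : {j // φ j = s}, ENNReal.ofReal (‖v jf.1‖ ^ 2)) ≤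
        ENNReal.ofReal (C * W s) := by
      have hre : (∑' jf : {j // φ j = s}, ENNReal.ofReal (‖v jf.1‖ ^ 2)) =
          ∑' jf : ({j | φ j = s} : Set ℕ), ENNReal.ofReal (‖v jf.1‖ ^ 2) := rfl
      rw [hre, tsum_subtype {j | φ j = s} (fun j => ENNReal.ofReal (‖v j‖ ^ 2))]
      refine le_trans (Summable.tsum_le_tsum (fun j => Set.indicator_le_indicator_of_subset
        hsub (fun _ => zero_le) j) ENNReal.summable ENNReal.summable) (hv s)
    calc (∑' jf : {j // φ j = s}, term jf.1)
        ≤ ∑' jf : {j // φ j = s}, ENNReal.ofReal (RB s / W s) *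
            (ENNReal.ofReal (‖u jf.1‖ ^ 2) +
              ENNReal.ofReal (‖v jf.1‖ ^ 2)) :=
          Summable.tsum_le_tsum hterm_le ENNReal.summable ENNReal.summable
      _ = ENNReal.ofReal (RB s / W s) *
            ((∑' jf : {j // φ j = s}, ENNReal.ofReal (‖u jf.1‖ ^ 2)) +
              ∑' jf : {j // φ j = s}, ENNReal.ofReal (‖v jf.1‖ ^ 2)) := by
          rw [ENNReal.tsum_mul_left, ENNReal.tsum_add]
      _ ≤ ENNReal.ofReal (RB s / W s) *
            (ENNReal.ofReal (C * W s) + ENNReal.ofReal (C * W s)) :=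
          mul_le_mul_right (add_le_add hsubU hsubV) _
      _ = ENNReal.ofReal (2 * C * RB s) := by
          rw [← ENNReal.ofReal_add (by positivity) (by positivity),
            ← ENNReal.ofReal_mul (div_nonneg (hRB0 s) (hW0 s).le)]
          congr 1
          field_simp [(hW0 s).ne']
          ring
  -- sigma decomposition over boxes
  have hsigma : (∑' j, term j) =
      ∑' (s : Fin n → ℤ), ∑' (jf : {j // φ j = s}), term jf.1 := by
    rw [← Equiv.tsum_eq (Equiv.sigmaFiberEquiv φ) term]
    exact ENNReal.tsum_sigma' _
  set GG : Fin n → ℤ → ℝ≥0∞ := fun k z => ENNReal.ofReal (gB ρ A (a k) (m k) z) with hGG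
  set WW : Fin n → ℤ → ℝ≥0∞ := fun l z => ENNReal.ofReal (wB ρ A (a l) (m l) z) with hWW
  have hofRB : ∀ s : Fin n → ℤ, ENNReal.ofReal (2 * C * RB s) =
      ENNReal.ofReal (2 * C) *
        ∑ k, GG k (s k) * ∏ l ∈ Finset.univ.erase k, WW l (s l) := by
    intro s
    rw [ENNReal.ofReal_mul (by positivity : (0:ℝ) ≤ 2 * C)]
    congr 1
    rw [hRBdef, ENNReal.ofReal_sum_of_nonneg (fun k _ =>
      mul_nonneg (gB_nonneg' hA0 _ _ (ha0 k) _)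
        (Finset.prod_nonneg fun l _ => wB_nonneg hmeas hA _ _ (ha0 l) _))]
    apply Finset.sum_congr rfl
    intro k _
    rw [ENNReal.ofReal_mul (gB_nonneg' hA0 _ _ (ha0 k) _),
      ENNReal.ofReal_prod_of_nonneg (fun l _ => wB_nonneg hmeas hA _ _ (ha0 l) _)]
  have hfact : ∀ k : Fin n,
      (∑' s : Fin n → ℤ, GG k (s k) * ∏ l ∈ Finset.univ.erase k, WW l (s l)) =
        (∑' z, GG k z) * ∏ l ∈ Finset.univ.erase k, ∑' z, WW l z := by
    intro k
    set F : Fin n → ℤ → ℝ≥0∞ := fun l z => if l = k then GG k z else WW l z with hF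
    have hFs : ∀ s : Fin n → ℤ,
        GG k (s k) * ∏ l ∈ Finset.univ.erase k, WW l (s l) = ∏ l, F l (s l) := by
      intro s
      rw [← Finset.mul_prod_erase Finset.univ (fun l => F l (s l)) (Finset.mem_univ k)]
      congr 1
      · rw [hF]; simp
      · apply Finset.prod_congr rfl
        intro l hl
        rw [hF]
        simp only [if_neg (Finset.mem_erase.1 hl).1]
    calc (∑' s : Fin n → ℤ, GG k (s k) * ∏ l ∈ Finset.univ.erase k, WW l (s l))
        = ∑' s : Fin n → ℤ, ∏ l, F l (s l) := tsum_congr hFs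
      _ = ∏ l, ∑' z, F l z := tsum_pi_prod F
      _ = (∑' z, GG k z) * ∏ l ∈ Finset.univ.erase k, ∑' z, WW l z := by
          rw [← Finset.mul_prod_erase Finset.univ (fun l => ∑' z, F l z)
            (Finset.mem_univ k)]
          congr 1
          · rw [hF]; simp
          · apply Finset.prod_congr rfl
            intro l hl
            rw [hF]
            simp only [if_neg (Finset.mem_erase.1 hl).1]
  have hG : ∀ k, (∑' z, GG k z) ≤ ENNReal.ofReal (γ k * lam ^ (m k)) := by
    intro k
    rw [hGG]
    rw [tsum_gB hmeas hA (a k) (m k) (ha0 k)]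
    apply ENNReal.ofReal_le_ofReal
    have h1 : (4 + a k) ^ (m k) ≤ lam ^ (m k) * (4 + |c k|) ^ (m k) := by
      rw [← Real.mul_rpow hlam0.le (by positivity)]
      apply Real.rpow_le_rpow (by linarith [ha0 k]) ?_ (hm k)
      simp only [hadef]
      nlinarith [abs_nonneg (c k)]
    have hAB2 : (0:ℝ) ≤ A * B2 := mul_nonneg hA0 B2_nonneg
    calc 18 * (A * B2) * (4 + a k) ^ (m k) * (Zr + Zr)
        ≤ 18 * (A * B2) * (lam ^ (m k) * (4 + |c k|) ^ (m k)) * (Zr + Zr) := by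
          apply mul_le_mul_of_nonneg_right (mul_le_mul_of_nonneg_left h1 (by linarith))
          linarith [Zr_nonneg]
      _ = γ k * lam ^ (m k) := by rw [hγdef]; ring
  have hWl : ∀ l, (∑' z, WW l z) ≤ ENNReal.ofReal (β l * lam ^ (m l + 1)) := by
    intro l
    rw [hWW]
    refine le_trans (tsum_wB hmeas hA (a l) (m l) (ha0 l)) (ENNReal.ofReal_le_ofReal ?_)
    have hMc := Mc_nonneg hmeas hA
    have h1 : (4 + a l) ^ (m l) ≤ lam ^ (m l) * (4 + |c l|) ^ (m l) := by
      rw [← Real.mul_rpow hlam0.le (by positivity)]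
      apply Real.rpow_le_rpow (by linarith [ha0 l]) ?_ (hm l)
      simp only [hadef]
      nlinarith [abs_nonneg (c l)]
    have h2 : (2 * a l + 5) + (Zr + Zr) ≤ lam * ((2 * |c l| + 5) + (Zr + Zr)) := by
      simp only [hadef]
      nlinarith [Zr_nonneg, abs_nonneg (c l)]
    have hlampow : lam ^ (m l + 1) = lam ^ (m l) * lam := by
      rw [Real.rpow_add hlam0, Real.rpow_one]
    have h1' : (B0 ρ + A * B2 + 1) * (4 + a l) ^ (m l) ≤
        (B0 ρ + A * B2 + 1) * (lam ^ (m l) * (4 + |c l|) ^ (m l)) :=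
      mul_le_mul_of_nonneg_left h1 hMc
    calc (B0 ρ + A * B2 + 1) * (4 + a l) ^ (m l) * ((2 * a l + 5) + (Zr + Zr))
        ≤ (B0 ρ + A * B2 + 1) * (lam ^ (m l) * (4 + |c l|) ^ (m l)) *
            (lam * ((2 * |c l| + 5) + (Zr + Zr))) := by
          apply mul_le_mul h1' h2 (by linarith [Zr_nonneg, ha0 l]) ?_
          · positivity
      _ = β l * lam ^ (m l + 1) := by rw [hβdef, hlampow]; ring
  have hexp : ∀ k : Fin n, m k + ∑ l ∈ Finset.univ.erase k, (m l + 1) = M + n - 1 := by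
    intro k
    rw [Finset.sum_add_distrib, Finset.sum_const,
      Finset.card_erase_of_mem (Finset.mem_univ k), Finset.card_univ, Fintype.card_fin]
    have h1 : (∑ l ∈ Finset.univ.erase k, m l) = M - m k := by
      rw [hMdef, ← Finset.add_sum_erase Finset.univ m (Finset.mem_univ k)]
      ring
    rw [h1, nsmul_eq_mul]
    have h2 : ((n - 1 : ℕ) : ℝ) = (n : ℝ) - 1 := by
      rw [Nat.cast_sub hn]
      norm_num
    rw [h2]
    ring
  have hkterm : ∀ k : Fin n,
      (∑' z, GG k z) * ∏ l ∈ Finset.univ.erase k, (∑' z, WW l z) ≤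
        ENNReal.ofReal ((γ k * ∏ l ∈ Finset.univ.erase k, β l) * lam ^ (M + (n:ℝ) - 1)) := by
    intro k
    calc (∑' z, GG k z) * ∏ l ∈ Finset.univ.erase k, (∑' z, WW l z)
        ≤ ENNReal.ofReal (γ k * lam ^ (m k)) *
            ∏ l ∈ Finset.univ.erase k, ENNReal.ofReal (β l * lam ^ (m l + 1)) :=
          mul_le_mul' (hG k) (Finset.prod_le_prod' fun l _ => hWl l)
      _ = ENNReal.ofReal ((γ k * lam ^ (m k)) *
            ∏ l ∈ Finset.univ.erase k, (β l * lam ^ (m l + 1))) := by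
          rw [← ENNReal.ofReal_prod_of_nonneg (fun l _ =>
              mul_nonneg (hβ0 l) (Real.rpow_nonneg hlam0.le _)),
            ← ENNReal.ofReal_mul (mul_nonneg (hγ0 k) (Real.rpow_nonneg hlam0.le _))]
      _ = ENNReal.ofReal ((γ k * ∏ l ∈ Finset.univ.erase k, β l) *
            lam ^ (M + (n:ℝ) - 1)) := by
          congr 1
          rw [Finset.prod_mul_distrib, ← rpow_sum_eq lam hlam0, ← hexp k,
            Real.rpow_add hlam0]
          ring
  calc (∑' j, term j)
      = ∑' (s : Fin n → ℤ), ∑' (jf : {j // φ j = s}), term jf.1 := hsigma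
    _ ≤ ∑' s : Fin n → ℤ, ENNReal.ofReal (2 * C * RB s) :=
        Summable.tsum_le_tsum hfiber ENNReal.summable ENNReal.summable
    _ = ENNReal.ofReal (2 * C) * ∑ k, ∑' s : Fin n → ℤ,
          GG k (s k) * ∏ l ∈ Finset.univ.erase k, WW l (s l) := by
        rw [tsum_congr hofRB, ENNReal.tsum_mul_left]
        congr 1
        exact Summable.tsum_finsetSum fun _ _ => ENNReal.summable
    _ ≤ ENNReal.ofReal (2 * C) * ∑ k,
          ENNReal.ofReal ((γ k * ∏ l ∈ Finset.univ.erase k, β l) *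
            lam ^ (M + (n:ℝ) - 1)) := by
        apply mul_le_mul_right
        apply Finset.sum_le_sum
        intro k _
        rw [hfact k]
        exact hkterm k
    _ = ENNReal.ofReal (C0 * lam ^ (M + (n:ℝ) - 1)) := by
        rw [← ENNReal.ofReal_sum_of_nonneg (fun k _ =>
            mul_nonneg (mul_nonneg (hγ0 k) (Finset.prod_nonneg fun l _ => hβ0 l))
              (Real.rpow_nonneg hlam0.le _)),
          ← ENNReal.ofReal_mul (by positivity : (0:ℝ) ≤ 2 * C)]
        congr 1
        rw [hC0def, ← Finset.sum_mul]
        ring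
    _ ≤ ENNReal.ofReal ((|C0| + 1) * lam ^ (M + (n:ℝ) - 1)) := by
        apply ENNReal.ofReal_le_ofReal
        apply mul_le_mul_of_nonneg_right _ (Real.rpow_nonneg hlam0.le _)
        linarith [le_abs_self C0]
end

section
/- Let n ≥ 1, let U ⊆ ℝⁿ × (ℝⁿ ∖ {0}) be open and conic in the ξ-variable, and let p₁,…,pₙ : U → ℝ be continuously differentiable and positively homogeneous of degree 1 in ξ, i.e. p_i(x, rξ) = r p_i(x, ξ) for all r > 0 and (x,ξ) ∈ U. Let (x₀,ξ₀) ∈ U and suppose that {p_i, p_ℓ}(x₀,ξ₀) = 0 for all i, ℓ ∈ {1,…,n}, and that ∑_{i=1}^n p_i(x₀,ξ₀)² > 0. Then the radial vector (0, ξ₀) ∈ ℝⁿ × ℝⁿ does not lie in the linear span of the n Hamiltonian vectors H_{p_1}(x₀,ξ₀), …, H_{p_n}(x₀,ξ₀). -/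
/-- Partial derivative in the `x_k` direction of a function on phase space `ℝⁿ × ℝⁿ`. -/
noncomputable def pDx {n : ℕ} (p : (Fin n → ℝ) × (Fin n → ℝ) → ℝ) (k : Fin n)
    (z : (Fin n → ℝ) × (Fin n → ℝ)) : ℝ :=
  fderiv ℝ p z (Pi.single k 1, 0)

/-- Partial derivative in the `ξ_k` direction of a function on phase space `ℝⁿ × ℝⁿ`. -/
noncomputable def pDxi {n : ℕ} (p : (Fin n → ℝ) × (Fin n → ℝ) → ℝ) (k : Fin n)
    (z : (Fin n → ℝ) × (Fin n → ℝ)) : ℝ :=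
  fderiv ℝ p z (0, Pi.single k 1)

/-- Poisson bracket `{p,q} = ∑ₖ ∂_{ξ_k}p ∂_{x_k}q − ∂_{x_k}p ∂_{ξ_k}q` on `ℝⁿ × ℝⁿ`. -/
noncomputable def poissonBracket {n : ℕ} (p q : (Fin n → ℝ) × (Fin n → ℝ) → ℝ)
    (z : (Fin n → ℝ) × (Fin n → ℝ)) : ℝ :=
  ∑ k, (pDxi p k z * pDx q k z - pDx p k z * pDxi q k z)

/-- Hamiltonian vector field `H_p = (∇_ξ p, −∇_x p)` on `ℝⁿ × ℝⁿ`. -/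
noncomputable def hamVF {n : ℕ} (p : (Fin n → ℝ) × (Fin n → ℝ) → ℝ)
    (z : (Fin n → ℝ) × (Fin n → ℝ)) : (Fin n → ℝ) × (Fin n → ℝ) :=
  (fun k => pDxi p k z, fun k => -pDx p k z)

/-- Decomposition of a continuous linear functional on `ℝⁿ × ℝⁿ` in the standard basis. -/
theorem clm_apply_decomp {n : ℕ} (L : ((Fin n → ℝ) × (Fin n → ℝ)) →L[ℝ] ℝ)
    (a b : Fin n → ℝ) :
    L (a, b) = ∑ k, a k * L (Pi.single k 1, 0) + ∑ k, b k * L (0, Pi.single k 1) := by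
  have h1 : ∀ (r : ℝ) (v : Fin n → ℝ), ((r • v, (0 : Fin n → ℝ))) = r • (v, (0 : Fin n → ℝ)) :=
    fun r v => by ext <;> simp
  have h2 : ∀ (r : ℝ) (v : Fin n → ℝ), (((0 : Fin n → ℝ), r • v)) = r • ((0 : Fin n → ℝ), v) :=
    fun r v => by ext <;> simp
  have hab : (a, b) = (∑ k, a k • ((Pi.single k 1 : Fin n → ℝ), (0 : Fin n → ℝ)))
      + ∑ k, b k • ((0 : Fin n → ℝ), (Pi.single k 1 : Fin n → ℝ)) := by
    ext j <;> simp [Prod.fst_sum, Prod.snd_sum, Finset.sum_apply, Pi.single_apply,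
      Finset.sum_ite_eq', mul_comm]
  rw [hab, map_add, map_sum, map_sum]
  simp only [h1, h2, map_smul, smul_eq_mul]

/-- Transversality of the radial vector field, from the proof of Proposition 4.2 of the
paper: for degree-1 homogeneous symbols that Poisson commute at `(x₀,ξ₀)` and satisfy the
ellipticity condition `∑ p_i(x₀,ξ₀)² > 0`, the radial vector `(0,ξ₀)` is not in the span
of the Hamiltonian vectors `H_{p_1}(x₀,ξ₀), …, H_{p_n}(x₀,ξ₀)`. -/
theorem radial_not_in_span (n : ℕ) (hn : 1 ≤ n)
    (U : Set ((Fin n → ℝ) × (Fin n → ℝ))) (hUopen : IsOpen U)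
    (hU0 : ∀ z ∈ U, z.2 ≠ 0)
    (hUconic : ∀ z ∈ U, ∀ r : ℝ, 0 < r → (z.1, r • z.2) ∈ U)
    (p : Fin n → (Fin n → ℝ) × (Fin n → ℝ) → ℝ)
    (hp : ∀ i, ContDiffOn ℝ 1 (p i) U)
    (hhom : ∀ i, ∀ z ∈ U, ∀ r : ℝ, 0 < r → p i (z.1, r • z.2) = r * p i z)
    (x₀ ξ₀ : Fin n → ℝ) (hz : (x₀, ξ₀) ∈ U)
    (hpois : ∀ i l, poissonBracket (p i) (p l) (x₀, ξ₀) = 0)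
    (hell : 0 < ∑ i, (p i (x₀, ξ₀)) ^ 2) :
    ((0 : Fin n → ℝ), ξ₀) ∉
      Submodule.span ℝ (Set.range fun i => hamVF (p i) (x₀, ξ₀)) := by
  intro hmem
  have hdiff : ∀ l, HasFDerivAt (p l) (fderiv ℝ (p l) (x₀, ξ₀)) (x₀, ξ₀) := by
    intro l
    exact (((hp l).contDiffAt (hUopen.mem_nhds hz)).differentiableAt one_ne_zero).hasFDerivAt
  set L : Fin n → ((Fin n → ℝ) × (Fin n → ℝ)) →L[ℝ] ℝ :=
    fun l => fderiv ℝ (p l) (x₀, ξ₀) with hL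
  -- Euler's identity: L l (0, ξ₀) = p l (x₀, ξ₀)
  have euler : ∀ l, L l ((0 : Fin n → ℝ), ξ₀) = p l (x₀, ξ₀) := by
    intro l
    have hcurve : HasDerivAt (fun r : ℝ => ((x₀, r • ξ₀) : (Fin n → ℝ) × (Fin n → ℝ)))
        ((0 : Fin n → ℝ), ξ₀) 1 := by
      have h1 : HasDerivAt (fun _ : ℝ => x₀) (0 : Fin n → ℝ) 1 := hasDerivAt_const _ _
      have h2 : HasDerivAt (fun r : ℝ => r • ξ₀) ξ₀ 1 := by
        simpa using (hasDerivAt_id (1:ℝ)).smul_const ξ₀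
      exact h1.prodMk h2
    have hd : HasFDerivAt (p l) (L l) (x₀, (1:ℝ) • ξ₀) := by simpa using hdiff l
    have hcomp : HasDerivAt (fun r : ℝ => p l (x₀, r • ξ₀)) (L l ((0 : Fin n → ℝ), ξ₀)) 1 :=
      hd.comp_hasDerivAt (1:ℝ) hcurve
    have heq : (fun r : ℝ => p l (x₀, r • ξ₀)) =ᶠ[nhds (1:ℝ)]
        fun r : ℝ => r * p l (x₀, ξ₀) := by
      filter_upwards [eventually_gt_nhds (by norm_num : (0:ℝ) < 1)] with r hr
      exact hhom l (x₀, ξ₀) hz r hr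
    have hlin : HasDerivAt (fun r : ℝ => r * p l (x₀, ξ₀)) (p l (x₀, ξ₀)) 1 := by
      simpa using (hasDerivAt_id (1:ℝ)).mul_const (p l (x₀, ξ₀))
    have := hcomp.congr_of_eventuallyEq heq.symm
    exact this.unique hlin
  -- L l vanishes on each Hamiltonian vector (Poisson commutation)
  have hham : ∀ i l, L l (hamVF (p i) (x₀, ξ₀)) = 0 := by
    intro i l
    simp only [hamVF]
    rw [clm_apply_decomp, ← hpois i l]
    simp only [poissonBracket, pDx, pDxi, hL]
    rw [← Finset.sum_add_distrib]
    exact Finset.sum_congr rfl (fun k _ => by ring)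
  -- hence L l vanishes on the span, so p l (x₀,ξ₀) = 0 for all l
  have hzero : ∀ l, p l (x₀, ξ₀) = 0 := by
    intro l
    rw [← euler l]
    have : Submodule.span ℝ (Set.range fun i => hamVF (p i) (x₀, ξ₀)) ≤
        LinearMap.ker (L l : ((Fin n → ℝ) × (Fin n → ℝ)) →ₗ[ℝ] ℝ) := by
      rw [Submodule.span_le]
      rintro - ⟨i, rfl⟩
      exact hham i l
    exact this hmem
  have : ∑ i, (p i (x₀, ξ₀)) ^ 2 = 0 := by
    apply Finset.sum_eq_zero; intro i _; rw [hzero i]; ring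
  rw [this] at hell
  exact lt_irrefl 0 hell
end
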